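/- arXiv:1803.11541 — 3 statements merged into one kernel-verified Lean document; each statement's English description precedes it below -/
import Mathlib

section
/- (Weak law of large numbers for Markov chains, Markov 1906) Let (X_n) be a stationary ergodic Markov chain on a finite state space with stationary distribution π, and let f be a real-valued function on the state space. Then (1/n)∑_{k=1}^n f(X_k) converges in probability to ∑_i π(i) f(i). -/
open Filter Topology MeasureTheory

section Aux

variable {S : Type*} [Fintype S] [DecidableEq S] [Nonempty S]

/-! ### Stochastic matrix basics -/

lemma mk_pow_nonneg (P : Matrix S S ℝ) (hnonneg : ∀ i j, 0 ≤ P i j) :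
    ∀ n i j, 0 ≤ (P ^ n) i j := by
  intro n
  induction n with
  | zero => intro i j; simp [Matrix.one_apply]; split <;> norm_num
  | succ n ih =>
    intro i j
    rw [pow_succ, Matrix.mul_apply]
    exact Finset.sum_nonneg fun k _ => mul_nonneg (ih i k) (hnonneg k j)

lemma mk_pow_rowsum (P : Matrix S S ℝ) (hrow : ∀ i, ∑ j, P i j = 1) :
    ∀ n i, ∑ j, (P ^ n) i j = 1 := by
  intro n
  induction n with
  | zero => intro i; simp [Matrix.one_apply]
  | succ n ih =>
    intro i
    simp only [pow_succ, Matrix.mul_apply]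
    rw [Finset.sum_comm]
    calc ∑ k, ∑ j, (P ^ n) i k * P k j = ∑ k, (P ^ n) i k * ∑ j, P k j := by
          simp [Finset.mul_sum]
      _ = 1 := by simp [hrow, ih]

lemma mk_mulVec_bound (P : Matrix S S ℝ) (hnonneg : ∀ i j, 0 ≤ P i j)
    (hrow : ∀ i, ∑ j, P i j = 1) (g : S → ℝ) (K : ℝ) (hK : ∀ j, |g j| ≤ K) :
    ∀ n i, |((P ^ n).mulVec g) i| ≤ K := by
  intro n i
  rw [Matrix.mulVec, dotProduct]
  calc |∑ j, (P ^ n) i j * g j| ≤ ∑ j, |(P ^ n) i j * g j| := Finset.abs_sum_le_sum_abs _ _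
    _ ≤ ∑ j, (P ^ n) i j * K := by
        apply Finset.sum_le_sum
        intro j _
        rw [abs_mul, abs_of_nonneg (mk_pow_nonneg P hnonneg n i j)]
        exact mul_le_mul_of_nonneg_left (hK j) (mk_pow_nonneg P hnonneg n i j)
    _ = K := by rw [← Finset.sum_mul, mk_pow_rowsum P hrow n i, one_mul]

lemma mk_fixed_const (P : Matrix S S ℝ) (hnonneg : ∀ i j, 0 ≤ P i j)
    (hrow : ∀ i, ∑ j, P i j = 1) (hirr : ∀ i j, ∃ n : ℕ, 0 < (P ^ n) i j)
    (h : S → ℝ) (hfix : P.mulVec h = h) : ∃ c, ∀ j, h j = c := by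
  have hfixn : ∀ n, (P ^ n).mulVec h = h := by
    intro n
    induction n with
    | zero => simp
    | succ n ih => rw [pow_succ, ← Matrix.mulVec_mulVec, hfix, ih]
  obtain ⟨i₀, -, hmax⟩ := Finset.exists_max_image (Finset.univ : Finset S) h
    ⟨Classical.arbitrary S, Finset.mem_univ _⟩
  refine ⟨h i₀, fun j => ?_⟩
  obtain ⟨n, hn⟩ := hirr i₀ j
  have key : ∑ k, (P ^ n) i₀ k * (h i₀ - h k) = 0 := by
    have h1 : ∑ k, (P ^ n) i₀ k * h k = h i₀ := by
      have := congrFun (hfixn n) i₀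
      rwa [Matrix.mulVec, dotProduct] at this
    simp only [mul_sub, Finset.sum_sub_distrib, ← Finset.sum_mul, mk_pow_rowsum P hrow n i₀,
      one_mul, h1, sub_self]
  have hterm := (Finset.sum_eq_zero_iff_of_nonneg (fun k _ =>
    mul_nonneg (mk_pow_nonneg P hnonneg n i₀ k)
      (sub_nonneg.mpr (hmax k (Finset.mem_univ k))))).mp key j (Finset.mem_univ j)
  rcases mul_eq_zero.mp hterm with h0 | h0
  · exact absurd h0 (ne_of_gt hn)
  · linarith [sub_eq_zero.mp h0]

lemma mk_surj (P : Matrix S S ℝ) (hnonneg : ∀ i j, 0 ≤ P i j)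
    (hrow : ∀ i, ∑ j, P i j = 1) (hirr : ∀ i j, ∃ n : ℕ, 0 < (P ^ n) i j)
    (π : S → ℝ) (hπsum : ∑ i, π i = 1) (hπstat : ∀ j, ∑ i, π i * P i j = π j)
    (F : S → ℝ) (hF : ∑ i, π i * F i = 0) :
    ∃ w : S → ℝ, ∀ i, F i = w i - P.mulVec w i := by
  classical
  set T : (S → ℝ) →ₗ[ℝ] (S → ℝ) := P.mulVecLin with hT
  set φ : (S → ℝ) →ₗ[ℝ] ℝ := ∑ i : S, π i • LinearMap.proj i with hφ
  have hφapp : ∀ v, φ v = ∑ i, π i * v i := by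
    intro v; simp [hφ, LinearMap.sum_apply, LinearMap.proj]
  set D : (S → ℝ) →ₗ[ℝ] (S → ℝ) := LinearMap.id - T with hD
  have hDapp : ∀ v i, D v i = v i - P.mulVec v i := by
    intro v i; simp [hD, hT]
  have hker : LinearMap.ker D = Submodule.span ℝ {(fun _ => (1:ℝ) : S → ℝ)} := by
    apply le_antisymm
    · intro h hh
      have : P.mulVec h = h := by
        funext i
        have h0 : D h i = 0 := by rw [LinearMap.mem_ker.mp hh]; rfl
        have h2 := hDapp h i
        rw [h0] at h2
        linarith
      obtain ⟨c, hc⟩ := mk_fixed_const P hnonneg hrow hirr h this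
      have : h = c • (fun _ => (1:ℝ)) := by funext j; simp [hc j]
      rw [this]
      exact Submodule.smul_mem _ _ (Submodule.mem_span_singleton_self _)
    · rw [Submodule.span_le]
      intro v hv
      simp only [Set.mem_singleton_iff] at hv
      subst hv
      rw [SetLike.mem_coe, LinearMap.mem_ker]
      funext i
      rw [hDapp]
      simp [Matrix.mulVec, dotProduct, hrow i]
  have hle : LinearMap.range D ≤ LinearMap.ker φ := by
    rintro v ⟨u, rfl⟩
    rw [LinearMap.mem_ker, hφapp]
    have : ∀ i, D u i = u i - ∑ j, P i j * u j := by
      intro i; rw [hDapp]; simp [Matrix.mulVec, dotProduct]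
    calc ∑ i, π i * D u i = ∑ i, (π i * u i - ∑ j, π i * (P i j * u j)) := by
          simp only [this, mul_sub, Finset.mul_sum]
      _ = ∑ i, π i * u i - ∑ j, (∑ i, π i * P i j) * u j := by
          rw [Finset.sum_sub_distrib, Finset.sum_comm]
          simp [Finset.sum_mul, mul_assoc]
      _ = 0 := by simp [hπstat, sub_self]
  have hone_ne : (fun _ => (1:ℝ) : S → ℝ) ≠ 0 := by
    intro hcontra
    have := congrFun hcontra (Classical.arbitrary S)
    norm_num at this
  have hkerD : Module.finrank ℝ (LinearMap.ker D) = 1 := by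
    rw [hker]
    exact finrank_span_singleton hone_ne
  have hφsurj : Function.Surjective φ := by
    intro c
    exact ⟨fun _ => c, by rw [hφapp]; simp [← Finset.sum_mul, hπsum]⟩
  have hrangeφ : Module.finrank ℝ (LinearMap.range φ) = 1 := by
    rw [LinearMap.range_eq_top.mpr hφsurj]
    simp
  have h1 := LinearMap.finrank_range_add_finrank_ker D
  have h2 := LinearMap.finrank_range_add_finrank_ker φ
  have hdim : Module.finrank ℝ (S → ℝ) = Fintype.card S := Module.finrank_fintype_fun_eq_card ℝ
  have heq : LinearMap.range D = LinearMap.ker φ := by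
    apply Submodule.eq_of_le_of_finrank_eq hle
    omega
  have hFmem : F ∈ LinearMap.ker φ := by rw [LinearMap.mem_ker, hφapp]; exact hF
  rw [← heq] at hFmem
  obtain ⟨w, hw⟩ := hFmem
  exact ⟨w, fun i => by rw [← hw, hDapp]⟩

/-! ### Path weights -/

def pathW (π : S → ℝ) (P : Matrix S S ℝ) (n : ℕ) (w : Fin (n + 1) → S) : ℝ :=
  π (w 0) * ∏ k : Fin n, P (w k.castSucc) (w k.succ)

lemma pathW_nonneg (π : S → ℝ) (P : Matrix S S ℝ) (hπ : ∀ i, 0 ≤ π i)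
    (hP : ∀ i j, 0 ≤ P i j) (n : ℕ) (w : Fin (n + 1) → S) : 0 ≤ pathW π P n w :=
  mul_nonneg (hπ _) (Finset.prod_nonneg fun _ _ => hP _ _)

lemma pathW_snoc (π : S → ℝ) (P : Matrix S S ℝ) (n : ℕ) (v : Fin (n + 1) → S) (x : S) :
    pathW π P (n + 1) (Fin.snoc v x) = pathW π P n v * P (v (Fin.last n)) x := by
  unfold pathW
  have h0 : (Fin.snoc v x : Fin (n+2) → S) 0 = v 0 := by
    rw [show (0 : Fin (n+2)) = Fin.castSucc 0 from rfl, Fin.snoc_castSucc]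
  rw [h0, Fin.prod_univ_castSucc]
  have hmid : ∀ t : Fin n,
      P ((Fin.snoc v x : Fin (n+2) → S) t.castSucc.castSucc)
        ((Fin.snoc v x : Fin (n+2) → S) t.castSucc.succ)
      = P (v t.castSucc) (v t.succ) := by
    intro t
    rw [Fin.succ_castSucc, Fin.snoc_castSucc, Fin.snoc_castSucc]
  have hlast : P ((Fin.snoc v x : Fin (n+2) → S) (Fin.last n).castSucc)
      ((Fin.snoc v x : Fin (n+2) → S) (Fin.last n).succ) = P (v (Fin.last n)) x := by
    rw [Fin.snoc_castSucc, show (Fin.last n).succ = Fin.last (n+1) from rfl, Fin.snoc_last]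
  rw [Finset.prod_congr rfl (fun t _ => hmid t), hlast]
  ring

lemma pathW_cons_sum (π : S → ℝ) (P : Matrix S S ℝ) (hπstat : ∀ j, ∑ i, π i * P i j = π j)
    (n : ℕ) (v : Fin (n + 1) → S) (r : ℝ) :
    ∑ x : S, pathW π P (n + 1) (Fin.cons x v) * r = pathW π P n v * r := by
  have hexp : ∀ x : S, pathW π P (n + 1) (Fin.cons x v)
      = π x * P x (v 0) * ∏ k : Fin n, P (v k.castSucc) (v k.succ) := by
    intro x
    unfold pathW
    rw [Fin.cons_zero, Fin.prod_univ_succ]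
    simp only [Fin.castSucc_zero, Fin.cons_zero, Fin.cons_succ, ← Fin.succ_castSucc]
    ring
  calc ∑ x, pathW π P (n + 1) (Fin.cons x v) * r
      = (∑ x, π x * P x (v 0)) * (∏ k : Fin n, P (v k.castSucc) (v k.succ)) * r := by
        rw [Finset.sum_mul, Finset.sum_mul]
        exact Finset.sum_congr rfl fun x _ => by rw [hexp x]
    _ = pathW π P n v * r := by rw [hπstat]; unfold pathW; ring

lemma path_endpoint (π : S → ℝ) (P : Matrix S S ℝ) (hrow : ∀ i, ∑ j, P i j = 1) :
    ∀ (m : ℕ) (G : S → S → ℝ),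
    ∑ w : Fin (m + 1) → S, pathW π P m w * G (w 0) (w (Fin.last m))
      = ∑ i, ∑ j, π i * (P ^ m) i j * G i j := by
  intro m
  induction m with
  | zero =>
    intro G
    rw [← Equiv.sum_comp (Equiv.funUnique (Fin 1) S).symm]
    simp [pathW, Matrix.one_apply, Equiv.funUnique]
  | succ m ih =>
    intro G
    have step : ∑ w : Fin (m + 1 + 1) → S, pathW π P (m + 1) w * G (w 0) (w (Fin.last (m+1)))
        = ∑ p : S × (Fin (m + 1) → S),
            pathW π P m p.2 * P (p.2 (Fin.last m)) p.1 * G (p.2 0) p.1 := by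
      rw [← Equiv.sum_comp (Fin.snocEquiv (fun _ : Fin (m + 1 + 1) => S))]
      apply Finset.sum_congr rfl
      rintro ⟨x, v⟩ -
      have he : (Fin.snocEquiv (fun _ : Fin (m + 1 + 1) => S)) (x, v) = Fin.snoc v x := by
        funext i; rfl
      rw [he, pathW_snoc]
      congr 1
      rw [show (0 : Fin (m+2)) = Fin.castSucc 0 from rfl, Fin.snoc_castSucc, Fin.snoc_last]
    rw [step, Fintype.sum_prod_type_right]
    have inner : ∀ v : Fin (m + 1) → S,
        ∑ x : S, pathW π P m v * P (v (Fin.last m)) x * G (v 0) x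
        = pathW π P m v * (∑ x, P (v (Fin.last m)) x * G (v 0) x) := by
      intro v
      rw [Finset.mul_sum]
      exact Finset.sum_congr rfl fun x _ => by ring
    rw [Finset.sum_congr rfl fun v _ => inner v]
    rw [ih (fun i j => ∑ x, P j x * G i x)]
    refine Finset.sum_congr rfl fun i _ => ?_
    calc ∑ j, π i * (P ^ m) i j * ∑ x, P j x * G i x
        = ∑ j, ∑ x, π i * ((P ^ m) i j * P j x) * G i x := by
          refine Finset.sum_congr rfl fun j _ => ?_
          rw [Finset.mul_sum]
          exact Finset.sum_congr rfl fun x _ => by ring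
      _ = ∑ x, ∑ j, π i * ((P ^ m) i j * P j x) * G i x := Finset.sum_comm
      _ = ∑ x, π i * (P ^ (m+1)) i x * G i x := by
          refine Finset.sum_congr rfl fun x _ => ?_
          rw [pow_succ, Matrix.mul_apply, Finset.mul_sum, Finset.sum_mul]

lemma path_twopoint (π : S → ℝ) (P : Matrix S S ℝ) (hrow : ∀ i, ∑ j, P i j = 1)
    (hπstat : ∀ j, ∑ i, π i * P i j = π j) :
    ∀ (n k l : ℕ) (hk : k ≤ l) (hl : l ≤ n) (G : S → S → ℝ),
    ∑ w : Fin (n + 1) → S,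
        pathW π P n w * G (w ⟨k, by omega⟩) (w ⟨l, by omega⟩)
      = ∑ i, ∑ j, π i * (P ^ (l - k)) i j * G i j := by
  intro n
  induction n with
  | zero =>
    intro k l hk hl G
    have hk0 : k = 0 := by omega
    have hl0 : l = 0 := by omega
    subst hk0; subst hl0
    rw [← Equiv.sum_comp (Equiv.funUnique (Fin 1) S).symm]
    simp [pathW, Matrix.one_apply, Equiv.funUnique]
  | succ n ih =>
    intro k l hk hl G
    by_cases hln : l ≤ n
    · have step : ∑ w : Fin (n + 1 + 1) → S,
          pathW π P (n + 1) w * G (w ⟨k, by omega⟩) (w ⟨l, by omega⟩)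
          = ∑ p : S × (Fin (n + 1) → S),
              pathW π P n p.2 * P (p.2 (Fin.last n)) p.1
                * G (p.2 ⟨k, by omega⟩) (p.2 ⟨l, by omega⟩) := by
        rw [← Equiv.sum_comp (Fin.snocEquiv (fun _ : Fin (n + 1 + 1) => S))]
        apply Finset.sum_congr rfl
        rintro ⟨x, v⟩ -
        have he : (Fin.snocEquiv (fun _ : Fin (n + 1 + 1) => S)) (x, v) = Fin.snoc v x := by
          funext i; rfl
        rw [he, pathW_snoc]
        congr 1
        rw [show (⟨k, by omega⟩ : Fin (n+2)) = Fin.castSucc ⟨k, by omega⟩ from Fin.ext rfl,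
          show (⟨l, by omega⟩ : Fin (n+2)) = Fin.castSucc ⟨l, by omega⟩ from Fin.ext rfl,
          Fin.snoc_castSucc, Fin.snoc_castSucc]
      rw [step, Fintype.sum_prod_type_right]
      have inner : ∀ v : Fin (n + 1) → S,
          ∑ x : S, pathW π P n v * P (v (Fin.last n)) x
              * G (v ⟨k, by omega⟩) (v ⟨l, by omega⟩)
          = pathW π P n v * G (v ⟨k, by omega⟩) (v ⟨l, by omega⟩) := by
        intro v
        rw [← Finset.sum_mul, ← Finset.mul_sum, hrow, mul_one]
      rw [Finset.sum_congr rfl fun v _ => inner v]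
      exact ih k l hk hln G
    · have hl1 : l = n + 1 := by omega
      subst hl1
      match k, hk with
      | 0, _ =>
        have := path_endpoint π P hrow (n+1) G
        rw [show (⟨0, by omega⟩ : Fin (n+2)) = 0 from rfl,
          show (⟨n+1, by omega⟩ : Fin (n+2)) = Fin.last (n+1) from rfl] at *
        rw [this]
        simp
      | (k' + 1), hk =>
        have step : ∑ w : Fin (n + 1 + 1) → S,
            pathW π P (n + 1) w * G (w ⟨k' + 1, by omega⟩) (w ⟨n + 1, by omega⟩)
            = ∑ p : S × (Fin (n + 1) → S),
                pathW π P (n + 1) (Fin.cons p.1 p.2)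
                  * G (p.2 ⟨k', by omega⟩) (p.2 ⟨n, by omega⟩) := by
          rw [← Equiv.sum_comp (Fin.consEquiv (fun _ : Fin (n + 1 + 1) => S))]
          apply Finset.sum_congr rfl
          rintro ⟨x, v⟩ -
          have he : (Fin.consEquiv (fun _ : Fin (n + 1 + 1) => S)) (x, v) = Fin.cons x v := by
            funext i; rfl
          rw [he]
          congr 1
        rw [step, Fintype.sum_prod_type_right]
        rw [Finset.sum_congr rfl fun v _ =>
          pathW_cons_sum π P hπstat n v (G (v ⟨k', by omega⟩) (v ⟨n, by omega⟩))]
        rw [ih k' n (by omega) (le_refl n) G]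
        simp [Nat.succ_sub_succ]

/-! ### Covariance function -/

noncomputable def covc (π : S → ℝ) (P : Matrix S S ℝ) (F : S → ℝ) (m : ℕ) : ℝ :=
  ∑ i, ∑ j, π i * (P ^ m) i j * (F i * F j)

lemma inner_cov (π : S → ℝ) (P : Matrix S S ℝ) (hrow : ∀ i, ∑ j, P i j = 1)
    (hπstat : ∀ j, ∑ i, π i * P i j = π j) (F : S → ℝ) (n : ℕ) (k l : Fin n) :
    ∑ w : Fin (n + 1) → S, pathW π P n w * (F (w k.succ) * F (w l.succ))
      = covc π P F (if k.1 ≤ l.1 then l.1 - k.1 else k.1 - l.1) := by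
  by_cases hkl : k.1 ≤ l.1
  · rw [if_pos hkl]
    have h := path_twopoint π P hrow hπstat n (k.1+1) (l.1+1) (by omega) (by omega)
      (fun i j => F i * F j)
    have hE : (l.1 + 1) - (k.1 + 1) = l.1 - k.1 := by omega
    rw [hE] at h
    have hL : (∑ w : Fin (n + 1) → S, pathW π P n w * (F (w k.succ) * F (w l.succ)))
        = ∑ w : Fin (n + 1) → S, pathW π P n w
            * ((fun i j => F i * F j) (w ⟨k.1+1, by omega⟩) (w ⟨l.1+1, by omega⟩)) := rfl
    exact hL.trans h
  · rw [if_neg hkl]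
    have h := path_twopoint π P hrow hπstat n (l.1+1) (k.1+1) (by omega) (by omega)
      (fun i j => F j * F i)
    have hE : (k.1 + 1) - (l.1 + 1) = k.1 - l.1 := by omega
    rw [hE] at h
    have hL : (∑ w : Fin (n + 1) → S, pathW π P n w * (F (w k.succ) * F (w l.succ)))
        = ∑ w : Fin (n + 1) → S, pathW π P n w
            * ((fun i j => F j * F i) (w ⟨l.1+1, by omega⟩) (w ⟨k.1+1, by omega⟩)) := rfl
    have hcomm : (∑ i, ∑ j, π i * (P ^ (k.1 - l.1)) i j * ((fun i j => F j * F i) i j))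
        = covc π P F (k.1 - l.1) := by
      unfold covc
      exact Finset.sum_congr rfl fun i _ => Finset.sum_congr rfl fun j _ => by ring
    exact hL.trans (h.trans hcomm)

/-! ### Cesàro telescoping bound -/

lemma row_bound (c : ℕ → ℝ) (B : ℝ)
    (htel : ∀ M, |∑ m ∈ Finset.range M, c (m + 1)| ≤ 2 * B)
    (n k : ℕ) (hk : k < n) :
    |∑ l ∈ Finset.range n, c (if k ≤ l then l - k else k - l)| ≤ |c 0| + 4 * B := by
  have hsplit : ∑ l ∈ Finset.range n, c (if k ≤ l then l - k else k - l)
      = (∑ l ∈ Finset.range k, c (k - l)) + ∑ l ∈ Finset.Ico k n, c (l - k) := by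
    rw [Finset.range_eq_Ico, ← Finset.sum_Ico_consecutive _ (Nat.zero_le k) (le_of_lt hk)]
    congr 1
    · rw [← Finset.range_eq_Ico]
      refine Finset.sum_congr rfl fun l hl => ?_
      have := Finset.mem_range.mp hl
      rw [if_neg (by omega)]
    · refine Finset.sum_congr rfl fun l hl => ?_
      have := (Finset.mem_Ico.mp hl).1
      rw [if_pos this]
  have h1 : ∑ l ∈ Finset.range k, c (k - l) = ∑ j ∈ Finset.range k, c (j + 1) := by
    rw [← Finset.sum_range_reflect (fun j => c (j + 1)) k]
    refine Finset.sum_congr rfl fun j hj => ?_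
    have := Finset.mem_range.mp hj
    congr 1
    omega
  have h2 : ∑ l ∈ Finset.Ico k n, c (l - k)
      = c 0 + ∑ m ∈ Finset.range (n - k - 1), c (m + 1) := by
    rw [Finset.sum_Ico_eq_sum_range]
    have hnk : n - k = (n - k - 1) + 1 := by omega
    rw [hnk, Finset.sum_range_succ']
    have e1 : ∀ m, c (k + (m + 1) - k) = c (m + 1) := fun m => by congr 1; omega
    have e2 : c (k + 0 - k) = c 0 := by congr 1; omega
    rw [Finset.sum_congr rfl fun m _ => e1 m, e2, add_comm]
    simp
  rw [hsplit, h1, h2]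
  calc |(∑ j ∈ Finset.range k, c (j + 1)) + (c 0 + ∑ m ∈ Finset.range (n - k - 1), c (m + 1))|
      ≤ |∑ j ∈ Finset.range k, c (j + 1)|
          + (|c 0| + |∑ m ∈ Finset.range (n - k - 1), c (m + 1)|) :=
        (abs_add_le _ _).trans (by gcongr; exact abs_add_le _ _)
    _ ≤ 2 * B + (|c 0| + 2 * B) := by
        have := htel k
        have := htel (n - k - 1)
        gcongr
    _ = |c 0| + 4 * B := by ring

/-! ### The variance bound -/

lemma V_bound (P : Matrix S S ℝ)
    (hnonneg : ∀ i j, 0 ≤ P i j)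
    (hrow : ∀ i, ∑ j, P i j = 1)
    (hirr : ∀ i j, ∃ n : ℕ, 0 < (P ^ n) i j)
    (π : S → ℝ)
    (hπnonneg : ∀ i, 0 ≤ π i) (hπsum : ∑ i, π i = 1)
    (hπstat : ∀ j, ∑ i, π i * P i j = π j)
    (f : S → ℝ) :
    ∃ C : ℝ, 0 ≤ C ∧ ∀ n : ℕ, 1 ≤ n →
      ∑ w : Fin (n + 1) → S, pathW π P n w
        * ((1 / (n : ℝ)) * ∑ k : Fin n, f (w k.succ) - ∑ i, π i * f i)^2 ≤ C / n := by
  classical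
  set μf := ∑ i, π i * f i with hμf
  set F : S → ℝ := fun i => f i - μf with hF
  have hFsum : ∑ i, π i * F i = 0 := by
    simp only [hF, mul_sub, Finset.sum_sub_distrib]
    rw [← Finset.sum_mul, hπsum, one_mul, ← hμf, sub_self]
  obtain ⟨w₀, hw₀⟩ := mk_surj P hnonneg hrow hirr π hπsum hπstat F hFsum
  set K := ∑ j, |w₀ j| with hKdef
  have hK0 : 0 ≤ K := Finset.sum_nonneg fun j _ => abs_nonneg _
  have hK : ∀ j, |w₀ j| ≤ K := fun j =>
    Finset.single_le_sum (f := fun j => |w₀ j|) (fun i _ => abs_nonneg _) (Finset.mem_univ j)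
  set b : ℕ → ℝ := fun m => ∑ i, π i * F i * ((P ^ m).mulVec w₀) i with hbdef
  set B := ∑ i, π i * |F i| * K with hBdef
  have hB0 : 0 ≤ B :=
    Finset.sum_nonneg fun i _ => mul_nonneg (mul_nonneg (hπnonneg i) (abs_nonneg _)) hK0
  have hb : ∀ m, |b m| ≤ B := by
    intro m
    calc |b m| ≤ ∑ i, |π i * F i * ((P ^ m).mulVec w₀) i| := Finset.abs_sum_le_sum_abs _ _
      _ ≤ B := Finset.sum_le_sum fun i _ => by
          rw [abs_mul, abs_mul, abs_of_nonneg (hπnonneg i)]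
          exact mul_le_mul_of_nonneg_left (mk_mulVec_bound P hnonneg hrow w₀ K hK m i)
            (mul_nonneg (hπnonneg i) (abs_nonneg _))
  have hmv : ∀ m i, ((P ^ m).mulVec F) i
      = ((P ^ m).mulVec w₀) i - ((P ^ (m+1)).mulVec w₀) i := by
    intro m i
    have hFfun : F = w₀ - P.mulVec w₀ := by
      funext j; exact (hw₀ j).trans rfl
    rw [hFfun, Matrix.mulVec_sub, Matrix.mulVec_mulVec, ← pow_succ]
    rfl
  have hc : ∀ m, covc π P F m = b m - b (m+1) := by
    intro m
    unfold covc
    rw [hbdef]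
    simp only
    rw [← Finset.sum_sub_distrib]
    refine Finset.sum_congr rfl fun i _ => ?_
    have hswap : ∑ j, π i * (P ^ m) i j * (F i * F j)
        = π i * F i * ∑ j, (P ^ m) i j * F j := by
      rw [Finset.mul_sum]
      exact Finset.sum_congr rfl fun j _ => by ring
    rw [hswap, show (∑ j, (P ^ m) i j * F j) = ((P ^ m).mulVec F) i from rfl, hmv m i]
    ring
  have htel : ∀ M, |∑ m ∈ Finset.range M, covc π P F (m + 1)| ≤ 2 * B := by
    intro M
    have hsum : ∑ m ∈ Finset.range M, covc π P F (m + 1) = b 1 - b (M + 1) := by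
      rw [← Finset.sum_range_sub' (fun m => b (m + 1)) M]
      exact Finset.sum_congr rfl fun m _ => hc (m + 1)
    rw [hsum]
    calc |b 1 - b (M+1)| ≤ |b 1| + |b (M+1)| := abs_sub _ _
      _ ≤ 2 * B := by have := hb 1; have := hb (M+1); linarith
  refine ⟨|covc π P F 0| + 4 * B, by positivity, ?_⟩
  intro n hn
  have hnR : (0:ℝ) < n := by exact_mod_cast hn
  have hemp : ∀ w : Fin (n + 1) → S,
      (1 / (n:ℝ)) * ∑ k : Fin n, f (w k.succ) - μf
      = (1 / (n:ℝ)) * ∑ k : Fin n, F (w k.succ) := by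
    intro w
    simp only [hF]
    rw [Finset.sum_sub_distrib, Finset.sum_const, Finset.card_univ, Fintype.card_fin,
      mul_sub, nsmul_eq_mul]
    have hcancel : (1 / (n:ℝ)) * ((n:ℝ) * μf) = μf := by field_simp
    rw [hcancel]
  have h2 : ∀ w : Fin (n+1) → S, pathW π P n w
      * ∑ k : Fin n, ∑ l : Fin n, F (w k.succ) * F (w l.succ)
      = ∑ k : Fin n, ∑ l : Fin n, pathW π P n w * (F (w k.succ) * F (w l.succ)) := by
    intro w
    rw [Finset.mul_sum]
    exact Finset.sum_congr rfl fun k _ => Finset.mul_sum _ _ _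
  have hVexp : ∑ w : Fin (n + 1) → S, pathW π P n w
        * ((1 / (n : ℝ)) * ∑ k : Fin n, f (w k.succ) - μf)^2
      = (1 / (n:ℝ))^2 * ∑ k : Fin n, ∑ l : Fin n,
          covc π P F (if k.1 ≤ l.1 then l.1 - k.1 else k.1 - l.1) := by
    calc ∑ w : Fin (n + 1) → S, pathW π P n w
          * ((1 / (n : ℝ)) * ∑ k : Fin n, f (w k.succ) - μf)^2
        = ∑ w : Fin (n + 1) → S, (1 / (n:ℝ))^2
            * ∑ k : Fin n, ∑ l : Fin n, pathW π P n w * (F (w k.succ) * F (w l.succ)) := by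
          refine Finset.sum_congr rfl fun w _ => ?_
          rw [hemp w, mul_pow, sq (∑ k : Fin n, F (w k.succ)), Finset.sum_mul_sum, ← h2 w]
          ring
      _ = (1 / (n:ℝ))^2 * ∑ w : Fin (n + 1) → S,
            ∑ k : Fin n, ∑ l : Fin n, pathW π P n w * (F (w k.succ) * F (w l.succ)) := by
          rw [Finset.mul_sum]
      _ = (1 / (n:ℝ))^2 * ∑ k : Fin n, ∑ l : Fin n,
            ∑ w : Fin (n + 1) → S, pathW π P n w * (F (w k.succ) * F (w l.succ)) := by
          congr 1
          rw [Finset.sum_comm]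
          exact Finset.sum_congr rfl fun k _ => Finset.sum_comm
      _ = (1 / (n:ℝ))^2 * ∑ k : Fin n, ∑ l : Fin n,
            covc π P F (if k.1 ≤ l.1 then l.1 - k.1 else k.1 - l.1) := by
          congr 1
          exact Finset.sum_congr rfl fun k _ => Finset.sum_congr rfl fun l _ =>
            inner_cov π P hrow hπstat F n k l
  have habs : |∑ k : Fin n, ∑ l : Fin n,
      covc π P F (if k.1 ≤ l.1 then l.1 - k.1 else k.1 - l.1)|
      ≤ n * (|covc π P F 0| + 4 * B) := by
    calc |∑ k : Fin n, ∑ l : Fin n,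
        covc π P F (if k.1 ≤ l.1 then l.1 - k.1 else k.1 - l.1)|
        ≤ ∑ k : Fin n, |∑ l : Fin n,
            covc π P F (if k.1 ≤ l.1 then l.1 - k.1 else k.1 - l.1)| :=
          Finset.abs_sum_le_sum_abs _ _
      _ ≤ ∑ _k : Fin n, (|covc π P F 0| + 4 * B) := by
          refine Finset.sum_le_sum fun k _ => ?_
          have hconv : ∑ l : Fin n, covc π P F (if k.1 ≤ l.1 then l.1 - k.1 else k.1 - l.1)
              = ∑ l ∈ Finset.range n,
                  covc π P F (if k.1 ≤ l then l - k.1 else k.1 - l) :=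
            Fin.sum_univ_eq_sum_range
              (fun l => covc π P F (if k.1 ≤ l then l - k.1 else k.1 - l)) n
          rw [hconv]
          exact row_bound (covc π P F) B htel n k.1 k.2
      _ = n * (|covc π P F 0| + 4 * B) := by
          rw [Finset.sum_const, Finset.card_univ, Fintype.card_fin, nsmul_eq_mul]
  rw [hVexp]
  calc (1 / (n:ℝ))^2 * ∑ k : Fin n, ∑ l : Fin n,
        covc π P F (if k.1 ≤ l.1 then l.1 - k.1 else k.1 - l.1)
      ≤ (1 / (n:ℝ))^2 * (n * (|covc π P F 0| + 4 * B)) := by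
        refine mul_le_mul_of_nonneg_left ?_ (sq_nonneg _)
        exact (le_abs_self _).trans habs
    _ = (|covc π P F 0| + 4 * B) / n := by
        field_simp
end Aux

/-- Weak law of large numbers for stationary ergodic finite Markov chains (Markov 1906):
the empirical averages of `f` along the chain converge in probability to the
`π`-expectation of `f`. -/
theorem markov_chain_weak_law_of_large_numbers
    {S : Type*} [Fintype S] [DecidableEq S] [Nonempty S] [MeasurableSpace S]
    [MeasurableSingletonClass S]
    {Ω : Type*} [MeasurableSpace Ω] (μ : Measure Ω) [IsProbabilityMeasure μ]
    (P : Matrix S S ℝ)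
    (hnonneg : ∀ i j, 0 ≤ P i j)
    (hrow : ∀ i, ∑ j, P i j = 1)
    (hirr : ∀ i j, ∃ n : ℕ, 0 < (P ^ n) i j)
    (haper : ∀ i, ∀ d : ℕ, (∀ n : ℕ, 0 < (P ^ n) i i → d ∣ n) → d = 1)
    (π : S → ℝ)
    (hπnonneg : ∀ i, 0 ≤ π i) (hπsum : ∑ i, π i = 1)
    (hπstat : ∀ j, ∑ i, π i * P i j = π j)
    (X : ℕ → Ω → S) (hX : ∀ n, Measurable (X n))
    -- the finite-dimensional distributions of the stationary Markov chain:
    (hlaw : ∀ (n : ℕ) (w : Fin (n + 1) → S),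
      μ {ω | ∀ k : Fin (n + 1), X k ω = w k} =
        ENNReal.ofReal (π (w 0) * ∏ k : Fin n, P (w k.castSucc) (w k.succ)))
    (f : S → ℝ) :
    ∀ ε : ℝ, 0 < ε →
      Tendsto (fun n : ℕ =>
          μ {ω | ε ≤ |(1 / (n : ℝ)) * ∑ k ∈ Finset.Icc 1 n, f (X k ω) - ∑ i, π i * f i|})
        atTop (𝓝 0) := by
  intro ε hε
  classical
  obtain ⟨C, hC0, hCbd⟩ := V_bound P hnonneg hrow hirr π hπnonneg hπsum hπstat f
  -- the "variance" sequence
  let Vfun : ℕ → ℝ := fun n => ∑ w : Fin (n + 1) → S, pathW π P n w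
    * ((1 / (n : ℝ)) * ∑ k : Fin n, f (w k.succ) - ∑ i, π i * f i)^2
  have hV0 : ∀ n, 0 ≤ Vfun n := fun n =>
    Finset.sum_nonneg fun w _ =>
      mul_nonneg (pathW_nonneg π P hπnonneg hnonneg n w) (sq_nonneg _)
  have hVle : ∀ n, 1 ≤ n → Vfun n ≤ C / n := fun n hn => hCbd n hn
  -- measurable partition events
  have hEmeas : ∀ (n : ℕ) (w : Fin (n + 1) → S),
      MeasurableSet {ω | ∀ k : Fin (n + 1), X k ω = w k} := by
    intro n w
    have hrepr : {ω | ∀ k : Fin (n + 1), X (k : ℕ) ω = w k}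
        = ⋂ k : Fin (n + 1), (X (k : ℕ)) ⁻¹' {w k} := by
      ext ω; simp [Set.mem_iInter, Set.mem_preimage]
    rw [hrepr]
    exact MeasurableSet.iInter fun k => (hX k) (measurableSet_singleton _)
  -- the key measure bound
  have hμA : ∀ n : ℕ,
      μ {ω | ε ≤ |(1 / (n : ℝ)) * ∑ k ∈ Finset.Icc 1 n, f (X k ω) - ∑ i, π i * f i|}
        ≤ ENNReal.ofReal (Vfun n / ε ^ 2) := by
    intro n
    set Bs : Finset (Fin (n + 1) → S) := Finset.univ.filter
      (fun w => ε ≤ |(1 / (n : ℝ)) * ∑ k : Fin n, f (w k.succ) - ∑ i, π i * f i|) with hBs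
    have hkey : ∀ ω : Ω, (1 / (n : ℝ)) * ∑ k ∈ Finset.Icc 1 n, f (X k ω)
        = (1 / (n : ℝ)) * ∑ k : Fin n, f (X (k.1 + 1) ω) := by
      intro ω
      congr 1
      rw [← Finset.Ico_add_one_right_eq_Icc, Finset.sum_Ico_eq_sum_range,
        show n + 1 - 1 = n from rfl,
        ← Fin.sum_univ_eq_sum_range (fun k => f (X (1 + k) ω)) n]
      exact Finset.sum_congr rfl fun k _ => by rw [Nat.add_comm 1 (k : ℕ)]
    have hdisj : Set.PairwiseDisjoint (↑Bs)
        (fun w : Fin (n + 1) → S => {ω | ∀ k : Fin (n + 1), X k ω = w k}) := by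
      intro w _ w' _ hne
      refine Set.disjoint_left.mpr fun ω hw hw' => hne (funext fun k => ?_)
      exact (hw k).symm.trans (hw' k)
    have hAeq : {ω | ε ≤ |(1 / (n : ℝ)) * ∑ k ∈ Finset.Icc 1 n, f (X k ω) - ∑ i, π i * f i|}
        = ⋃ w ∈ Bs, {ω | ∀ k : Fin (n + 1), X k ω = w k} := by
      ext ω
      simp only [Set.mem_setOf_eq, Set.mem_iUnion, exists_prop]
      constructor
      · intro hω
        refine ⟨fun k : Fin (n + 1) => X (k : ℕ) ω, ?_, fun k => rfl⟩
        rw [hBs, Finset.mem_filter]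
        refine ⟨Finset.mem_univ _, ?_⟩
        show ε ≤ |(1 / (n : ℝ)) * ∑ k : Fin n, f (X (k.1 + 1) ω) - ∑ i, π i * f i|
        rw [← hkey ω]
        exact hω
      · rintro ⟨w, hwB, hw⟩
        have hQ : ε ≤ |(1 / (n : ℝ)) * ∑ k : Fin n, f (w k.succ) - ∑ i, π i * f i| :=
          (Finset.mem_filter.mp hwB).2
        have hwfun : ∀ k : Fin n, w k.succ = X (k.1 + 1) ω := fun k => (hw k.succ).symm
        rw [Finset.sum_congr rfl fun k _ => congrArg f (hwfun k)] at hQ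
        rw [hkey ω]
        exact hQ
    rw [hAeq, measure_biUnion_finset hdisj (fun w _ => hEmeas n w)]
    have hstep : ∀ w ∈ Bs, μ {ω | ∀ k : Fin (n + 1), X k ω = w k}
        = ENNReal.ofReal (pathW π P n w) := fun w _ => hlaw n w
    rw [Finset.sum_congr rfl hstep,
      ← ENNReal.ofReal_sum_of_nonneg (fun w _ => pathW_nonneg π P hπnonneg hnonneg n w)]
    apply ENNReal.ofReal_le_ofReal
    calc ∑ w ∈ Bs, pathW π P n w
        ≤ ∑ w ∈ Bs, pathW π P n w
            * ((1 / (n : ℝ)) * ∑ k : Fin n, f (w k.succ) - ∑ i, π i * f i)^2 / ε ^ 2 := by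
          refine Finset.sum_le_sum fun w hw => ?_
          have hQ := (Finset.mem_filter.mp hw).2
          have h1 : ε ^ 2
              ≤ ((1 / (n : ℝ)) * ∑ k : Fin n, f (w k.succ) - ∑ i, π i * f i)^2 := by
            have := pow_le_pow_left₀ hε.le hQ 2
            rwa [sq_abs] at this
          have hp := pathW_nonneg π P hπnonneg hnonneg n w
          have hone : (1:ℝ) ≤ ((1 / (n : ℝ)) * ∑ k : Fin n, f (w k.succ)
              - ∑ i, π i * f i)^2 / ε ^ 2 :=
            (one_le_div (by positivity)).mpr h1
          calc pathW π P n w = pathW π P n w * 1 := (mul_one _).symm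
            _ ≤ pathW π P n w * (((1 / (n : ℝ)) * ∑ k : Fin n, f (w k.succ)
                  - ∑ i, π i * f i)^2 / ε ^ 2) := mul_le_mul_of_nonneg_left hone hp
            _ = pathW π P n w * ((1 / (n : ℝ)) * ∑ k : Fin n, f (w k.succ)
                  - ∑ i, π i * f i)^2 / ε ^ 2 := (mul_div_assoc _ _ _).symm
      _ ≤ ∑ w : Fin (n + 1) → S, pathW π P n w
            * ((1 / (n : ℝ)) * ∑ k : Fin n, f (w k.succ) - ∑ i, π i * f i)^2 / ε ^ 2 :=
          Finset.sum_le_sum_of_subset_of_nonneg (Finset.subset_univ _) (fun w _ _ =>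
            div_nonneg (mul_nonneg (pathW_nonneg π P hπnonneg hnonneg n w) (sq_nonneg _))
              (sq_nonneg ε))
      _ = Vfun n / ε ^ 2 := by rw [← Finset.sum_div]
  -- convergence
  have hVtend : Tendsto Vfun atTop (𝓝 0) := by
    apply squeeze_zero' (Filter.Eventually.of_forall hV0) ?_
      (tendsto_const_div_atTop_nhds_zero_nat C)
    filter_upwards [Filter.eventually_ge_atTop 1] with n hn
    exact hVle n hn
  have hdiv : Tendsto (fun n => Vfun n / ε ^ 2) atTop (𝓝 0) := by
    have := hVtend.div_const (ε ^ 2)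
    simpa using this
  have hupper : Tendsto (fun n => ENNReal.ofReal (Vfun n / ε ^ 2)) atTop (𝓝 0) := by
    have := ENNReal.tendsto_ofReal hdiv
    simpa using this
  refine tendsto_of_tendsto_of_tendsto_of_le_of_le' tendsto_const_nhds hupper
    (Filter.Eventually.of_forall fun n => zero_le)
    (Filter.Eventually.of_forall hμA)
end

section
/- (Galton–Watson extinction criterion) Let (Z_n) be a Galton–Watson branching process with offspring distribution (p_k), Z_0 = 1, p_1 < 1, and mean m = ∑ k·p_k. The extinction probability q = ℙ(∃ n, Z_n = 0) is the smallest fixed point in [0,1] of the offspring generating function f(s) = ∑ p_k s^k; moreover q = 1 if m ≤ 1 and q < 1 if m > 1. -/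
open MeasureTheory

/-- The population sizes of a Galton–Watson branching process built from the i.i.d.
offspring array `ξ`: `Z 0 = 1` and `Z (n+1) = ∑_{i < Z n} ξ n i`. -/
def gwProcess {Ω : Type*} (ξ : ℕ → ℕ → Ω → ℕ) : ℕ → Ω → ℕ
  | 0 => fun _ => 1
  | n + 1 => fun ω => ∑ i ∈ Finset.range (gwProcess ξ n ω), ξ n i ω

open Finset ProbabilityTheory

set_option linter.unusedSectionVars false

section Prob
variable {Ω : Type*} [MeasurableSpace Ω] (μ : Measure Ω) [IsProbabilityMeasure μ]
  (ξ : ℕ → ℕ → Ω → ℕ)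

/-- σ-algebra generated by the variables `ξ q` for `q ∈ S`. -/
def gwAlg (S : Set (ℕ × ℕ)) : MeasurableSpace Ω :=
  ⨆ q ∈ S, MeasurableSpace.comap (fun ω => ξ q.1 q.2 ω) inferInstance

lemma gwAlg_mono {S T : Set (ℕ × ℕ)} (h : S ⊆ T) : gwAlg ξ S ≤ gwAlg ξ T :=
  biSup_mono h

lemma gwAlg_le (hmeas : ∀ n i, Measurable (ξ n i)) (S : Set (ℕ × ℕ)) :
    gwAlg ξ S ≤ ‹MeasurableSpace Ω› :=
  iSup₂_le fun q _ => (hmeas q.1 q.2).comap_le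

lemma gw_meas_xi {S : Set (ℕ × ℕ)} {q : ℕ × ℕ} (hq : q ∈ S) :
    Measurable[gwAlg ξ S] (fun ω => ξ q.1 q.2 ω) :=
  Measurable.of_comap_le
    (le_biSup (fun q : ℕ × ℕ => MeasurableSpace.comap (fun ω => ξ q.1 q.2 ω)
      (inferInstance : MeasurableSpace ℕ)) hq)

lemma gw_meas : ∀ n, Measurable[gwAlg ξ {q : ℕ × ℕ | q.1 < n}] (gwProcess ξ n) := by
  intro n
  induction n with
  | zero => exact measurable_const
  | succ n ih =>
    set A := gwAlg ξ {q : ℕ × ℕ | q.1 < n + 1} with hA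
    have hZ : Measurable[A] (gwProcess ξ n) :=
      ih.mono (gwAlg_mono ξ (fun q hq => Nat.lt_succ_of_lt hq)) le_rfl
    have hS : ∀ j : ℕ, Measurable[A] (fun ω => ∑ i ∈ range j, ξ n i ω) := by
      intro j
      refine Finset.measurable_sum _ (fun i _ => ?_)
      exact gw_meas_xi ξ (show (n, i) ∈ {q : ℕ × ℕ | q.1 < n + 1} by simp)
    refine measurable_to_countable' (fun k => ?_)
    have : gwProcess ξ (n+1) ⁻¹' {k} =
        ⋃ j, (gwProcess ξ n ⁻¹' {j}) ∩ ((fun ω => ∑ i ∈ range j, ξ n i ω) ⁻¹' {k}) := by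
      ext ω
      simp only [Set.mem_preimage, Set.mem_singleton_iff, Set.mem_iUnion, Set.mem_inter_iff]
      constructor
      · intro h; exact ⟨gwProcess ξ n ω, rfl, h⟩
      · rintro ⟨j, hj, hk⟩
        show (∑ i ∈ range (gwProcess ξ n ω), ξ n i ω) = k
        rw [hj]; exact hk
    rw [this]
    exact MeasurableSet.iUnion fun j =>
      (hZ (measurableSet_singleton j)).inter (hS j (measurableSet_singleton k))

set_option maxHeartbeats 1000000 in
lemma gw_indep (hmeas : ∀ n i, Measurable (ξ n i))
    (hindep : ProbabilityTheory.iIndepFun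
      (fun q : ℕ × ℕ => ξ q.1 q.2) μ)
    {S T : Set (ℕ × ℕ)} (hST : Disjoint S T) :
    Indep (gwAlg ξ S) (gwAlg ξ T) μ := by
  have h1 : iIndep (fun q : ℕ × ℕ => MeasurableSpace.comap (fun ω => ξ q.1 q.2 ω)
      (inferInstance : MeasurableSpace ℕ)) μ := hindep.iIndep
  unfold gwAlg
  exact indep_iSup_of_disjoint
    (m := fun q : ℕ × ℕ => MeasurableSpace.comap (fun ω => ξ q.1 q.2 ω)
      (inferInstance : MeasurableSpace ℕ))
    (fun q => (hmeas q.1 q.2).comap_le) h1 hST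

lemma gw_indep_mono {m₁ m₂ m₁' m₂' : MeasurableSpace Ω} (h : Indep m₁ m₂ μ)
    (h1 : m₁' ≤ m₁) (h2 : m₂' ≤ m₂) : Indep m₁' m₂' μ := by
  rw [Indep_iff] at h ⊢
  exact fun t1 t2 ht1 ht2 => h t1 t2 (h1 _ ht1) (h2 _ ht2)

lemma gw_integrable_of_bound {X : Ω → ℝ} (hX : Measurable X) (C : ℝ)
    (h : ∀ ω, ‖X ω‖ ≤ C) : Integrable X μ :=
  (integrable_const C).mono' hX.aestronglyMeasurable (Filter.Eventually.of_forall h)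

lemma gw_integral_comp {g : Ω → ℕ} (hg : Measurable g) (h : ℕ → ℝ) (C : ℝ)
    (hC : ∀ k, ‖h k‖ ≤ C) :
    ∫ ω, h (g ω) ∂μ = ∑' k, (μ (g ⁻¹' {k})).toReal * h k := by
  have hmap : IsProbabilityMeasure (μ.map g) := Measure.isProbabilityMeasure_map hg.aemeasurable
  have hint : Integrable h (μ.map g) := by
    refine (integrable_const C).mono' ?_ (Filter.Eventually.of_forall hC)
    exact (Measurable.of_discrete (f := h)).aestronglyMeasurable
  rw [← integral_map hg.aemeasurable
    (Measurable.of_discrete (f := h)).aestronglyMeasurable]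
  rw [integral_countable' hint]
  congr 1
  ext k
  rw [measureReal_def, Measure.map_apply hg (measurableSet_singleton k), smul_eq_mul]

end Prob
section Prob2
variable {Ω : Type*} [MeasurableSpace Ω] (μ : Measure Ω) [IsProbabilityMeasure μ]
  (ξ : ℕ → ℕ → Ω → ℕ) (p : ℕ → ℝ) (f : ℝ → ℝ)

lemma gw_pow_norm_le {s : ℝ} (hs : s ∈ Set.Icc (0:ℝ) 1) (k : ℕ) : ‖s ^ k‖ ≤ 1 := by
  rw [Real.norm_eq_abs, abs_of_nonneg (pow_nonneg hs.1 k)]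
  exact pow_le_one₀ hs.1 hs.2

lemma gw_integral_pow_xi (hmeas : ∀ n i, Measurable (ξ n i))
    (hp : ∀ k, 0 ≤ p k)
    (hdist : ∀ n i k, μ {ω | ξ n i ω = k} = ENNReal.ofReal (p k))
    (hf : ∀ s ∈ Set.Icc (0 : ℝ) 1, HasSum (fun k => p k * s ^ k) (f s))
    {s : ℝ} (hs : s ∈ Set.Icc (0:ℝ) 1) (n i : ℕ) :
    ∫ ω, s ^ ξ n i ω ∂μ = f s := by
  rw [gw_integral_comp μ (hmeas n i) (fun k => s ^ k) 1 (gw_pow_norm_le hs)]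
  have hmk : ∀ k : ℕ, (μ (ξ n i ⁻¹' {k})).toReal = p k := by
    intro k
    have : ξ n i ⁻¹' {k} = {ω | ξ n i ω = k} := rfl
    rw [this, hdist n i k, ENNReal.toReal_ofReal (hp k)]
  simp_rw [hmk]
  exact (hf s hs).tsum_eq

lemma gw_prod_meas (hmeas : ∀ n i, Measurable (ξ n i)) (s : ℝ) (n j : ℕ) :
    Measurable (fun ω => ∏ i ∈ Finset.range j, s ^ ξ n i ω) :=
  Finset.measurable_prod _ (fun i _ => Measurable.of_discrete.comp (hmeas n i))

lemma gw_prod_norm_le {s : ℝ} (hs : s ∈ Set.Icc (0:ℝ) 1) (n j : ℕ) (ω : Ω) :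
    ‖∏ i ∈ Finset.range j, s ^ ξ n i ω‖ ≤ 1 := by
  have h0 : (0:ℝ) ≤ ∏ i ∈ Finset.range j, s ^ ξ n i ω :=
    Finset.prod_nonneg (fun i _ => pow_nonneg hs.1 _)
  rw [Real.norm_eq_abs, abs_of_nonneg h0]
  exact Finset.prod_le_one (fun i _ => pow_nonneg hs.1 _)
    (fun i _ => pow_le_one₀ hs.1 hs.2)

lemma gw_integral_prod (hmeas : ∀ n i, Measurable (ξ n i))
    (hindep : ProbabilityTheory.iIndepFun
      (fun q : ℕ × ℕ => ξ q.1 q.2) μ)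
    (hp : ∀ k, 0 ≤ p k)
    (hdist : ∀ n i k, μ {ω | ξ n i ω = k} = ENNReal.ofReal (p k))
    (hf : ∀ s ∈ Set.Icc (0 : ℝ) 1, HasSum (fun k => p k * s ^ k) (f s))
    {s : ℝ} (hs : s ∈ Set.Icc (0:ℝ) 1) (n : ℕ) :
    ∀ j, ∫ ω, ∏ i ∈ Finset.range j, s ^ ξ n i ω ∂μ = (f s) ^ j := by
  intro j
  induction j with
  | zero => simp
  | succ j ih =>
    set Y : ℕ × ℕ → Ω → ℝ := fun q ω => s ^ ξ q.1 q.2 ω with hYdef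
    have hY : ProbabilityTheory.iIndepFun Y μ := hindep.comp (fun _ k => s ^ k) (fun _ => Measurable.of_discrete)
    have hYmeas : ∀ q, Measurable (Y q) := fun q => Measurable.of_discrete.comp (hmeas q.1 q.2)
    have hnm : (n, j) ∉ (Finset.range j).image (fun i => (n, i)) := by simp
    have hInd := hY.indepFun_finset_prod_of_notMem hYmeas hnm
    have hprodeq : (∏ q ∈ (Finset.range j).image (fun i => (n, i)), Y q) =
        fun ω => ∏ i ∈ Finset.range j, s ^ ξ n i ω := by
      rw [Finset.prod_image (by intro a _ b _ h; simpa using h)]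
      funext ω
      exact Finset.prod_apply ω _ _
    rw [hprodeq] at hInd
    have hint1 : Integrable (fun ω => ∏ i ∈ Finset.range j, s ^ ξ n i ω) μ :=
      gw_integrable_of_bound μ (gw_prod_meas ξ hmeas s n j) 1 (gw_prod_norm_le ξ hs n j)
    have hint2 : Integrable (Y (n, j)) μ :=
      gw_integrable_of_bound μ (hYmeas _) 1 (fun ω => gw_pow_norm_le hs _)
    have hmul := hInd.integral_mul_eq_mul_integral hint1.aestronglyMeasurable hint2.aestronglyMeasurable
    calc ∫ ω, ∏ i ∈ Finset.range (j+1), s ^ ξ n i ω ∂μ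
        = ∫ ω, ((fun ω => ∏ i ∈ Finset.range j, s ^ ξ n i ω) * Y (n, j)) ω ∂μ := by
          apply integral_congr_ae
          filter_upwards with ω
          simp [Finset.prod_range_succ, hYdef]
      _ = (∫ ω, ∏ i ∈ Finset.range j, s ^ ξ n i ω ∂μ) * ∫ ω, Y (n, j) ω ∂μ := hmul
      _ = (f s) ^ j * f s := by
          rw [ih]
          congr 1
          exact gw_integral_pow_xi μ ξ p f hmeas hp hdist hf hs n j
      _ = (f s) ^ (j+1) := by ring

end Prob2
section Prob3
variable {Ω : Type*} [MeasurableSpace Ω] (μ : Measure Ω) [IsProbabilityMeasure μ]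
  (ξ : ℕ → ℕ → Ω → ℕ) (p : ℕ → ℝ) (f : ℝ → ℝ)

lemma gw_meas_amb (hmeas : ∀ n i, Measurable (ξ n i)) (n : ℕ) :
    Measurable (gwProcess ξ n) :=
  (gw_meas ξ n).mono (gwAlg_le ξ hmeas _) le_rfl

lemma gw_pow_Z_meas (hmeas : ∀ n i, Measurable (ξ n i)) (s : ℝ) (n : ℕ) :
    Measurable (fun ω => s ^ gwProcess ξ n ω) :=
  Measurable.of_discrete.comp (gw_meas_amb ξ hmeas n)

lemma gw_pow_Z_int (hmeas : ∀ n i, Measurable (ξ n i)) {s : ℝ}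
    (hs : s ∈ Set.Icc (0:ℝ) 1) (n : ℕ) :
    Integrable (fun ω => s ^ gwProcess ξ n ω) μ :=
  gw_integrable_of_bound μ (gw_pow_Z_meas ξ hmeas s n) 1 (fun ω => gw_pow_norm_le hs _)

lemma gw_setIntegral (hmeas : ∀ n i, Measurable (ξ n i))
    (hindep : ProbabilityTheory.iIndepFun
      (fun q : ℕ × ℕ => ξ q.1 q.2) μ)
    (hp : ∀ k, 0 ≤ p k)
    (hdist : ∀ n i k, μ {ω | ξ n i ω = k} = ENNReal.ofReal (p k))
    (hf : ∀ s ∈ Set.Icc (0 : ℝ) 1, HasSum (fun k => p k * s ^ k) (f s))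
    {s : ℝ} (hs : s ∈ Set.Icc (0:ℝ) 1) (n j : ℕ) :
    ∫ ω in gwProcess ξ n ⁻¹' {j}, (∏ i ∈ Finset.range j, s ^ ξ n i ω) ∂μ
      = (μ (gwProcess ξ n ⁻¹' {j})).toReal * (f s) ^ j := by
  set A : Set Ω := gwProcess ξ n ⁻¹' {j} with hAdef
  set B : Ω → ℝ := fun ω => ∏ i ∈ Finset.range j, s ^ ξ n i ω with hBdef
  have hA : MeasurableSet A := gw_meas_amb ξ hmeas n (measurableSet_singleton j)
  have hAlt : MeasurableSet[gwAlg ξ {q : ℕ × ℕ | q.1 < n}] A :=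
    gw_meas ξ n (measurableSet_singleton j)
  have hBrow : Measurable[gwAlg ξ {q : ℕ × ℕ | q.1 = n}] B :=
    Finset.measurable_prod _ (fun i _ => Measurable.of_discrete.comp
      (gw_meas_xi ξ (show ((n, i) : ℕ × ℕ) ∈ {q : ℕ × ℕ | q.1 = n} from rfl)))
  set X : Ω → ℝ := A.indicator (fun _ => (1:ℝ)) with hXdef
  have hXlt : Measurable[gwAlg ξ {q : ℕ × ℕ | q.1 < n}] X :=
    measurable_const.indicator hAlt
  have hIndep2 : ProbabilityTheory.Indep (gwAlg ξ {q : ℕ × ℕ | q.1 < n})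
      (gwAlg ξ {q : ℕ × ℕ | q.1 = n}) μ := by
    refine gw_indep μ ξ hmeas hindep ?_
    rw [Set.disjoint_left]
    rintro ⟨a, b⟩ ha hb
    exact absurd hb (by simpa using ha.ne)
  have hIndF : ProbabilityTheory.IndepFun X B μ := by
    rw [ProbabilityTheory.IndepFun_iff_Indep]
    exact gw_indep_mono μ hIndep2 hXlt.comap_le hBrow.comap_le
  have hXmeas : Measurable X := measurable_const.indicator hA
  have hXint : Integrable X μ := by
    refine gw_integrable_of_bound μ hXmeas 1 (fun ω => ?_)
    by_cases h : ω ∈ A <;> simp [hXdef, h]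
  have hBint : Integrable B μ :=
    gw_integrable_of_bound μ (gw_prod_meas ξ hmeas s n j) 1 (gw_prod_norm_le ξ hs n j)
  have hmul := hIndF.integral_mul_eq_mul_integral hXint.aestronglyMeasurable hBint.aestronglyMeasurable
  have hXB : X * B = A.indicator B := by
    funext ω
    by_cases h : ω ∈ A <;> simp [hXdef, h]
  rw [hXB] at hmul
  rw [← integral_indicator hA, hmul]
  congr 1
  · rw [hXdef, integral_indicator_const (1:ℝ) hA, smul_eq_mul, mul_one, measureReal_def]
  · exact gw_integral_prod μ ξ p f hmeas hindep hp hdist hf hs n j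

lemma gw_step (hmeas : ∀ n i, Measurable (ξ n i))
    (hindep : ProbabilityTheory.iIndepFun
      (fun q : ℕ × ℕ => ξ q.1 q.2) μ)
    (hp : ∀ k, 0 ≤ p k)
    (hdist : ∀ n i k, μ {ω | ξ n i ω = k} = ENNReal.ofReal (p k))
    (hf : ∀ s ∈ Set.Icc (0 : ℝ) 1, HasSum (fun k => p k * s ^ k) (f s))
    {s : ℝ} (hs : s ∈ Set.Icc (0:ℝ) 1) (n : ℕ)
    (hfs : f s ∈ Set.Icc (0:ℝ) 1) :
    ∫ ω, s ^ gwProcess ξ (n+1) ω ∂μ = ∫ ω, (f s) ^ gwProcess ξ n ω ∂μ := by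
  set A : ℕ → Set Ω := fun j => gwProcess ξ n ⁻¹' {j} with hAdef
  have hA : ∀ j, MeasurableSet (A j) :=
    fun j => gw_meas_amb ξ hmeas n (measurableSet_singleton j)
  have hdisj : Pairwise (Function.onFun Disjoint A) := by
    intro i j hij
    simp only [Function.onFun, hAdef]
    rw [Set.disjoint_left]
    intro ω hi hj
    exact hij ((Set.mem_preimage.mp hi).symm.trans (Set.mem_preimage.mp hj))
  have hcover : (⋃ j, A j) = Set.univ := by
    ext ω; simp [hAdef]
  -- LHS decomposition
  have hLint : Integrable (fun ω => s ^ gwProcess ξ (n+1) ω) μ :=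
    gw_pow_Z_int μ ξ hmeas hs (n+1)
  have hRint : Integrable (fun ω => (f s) ^ gwProcess ξ n ω) μ :=
    gw_pow_Z_int μ ξ hmeas hfs n
  have hL : ∫ ω, s ^ gwProcess ξ (n+1) ω ∂μ
      = ∑' j, ∫ ω in A j, s ^ gwProcess ξ (n+1) ω ∂μ := by
    rw [← setIntegral_univ (μ := μ), ← hcover]
    exact integral_iUnion hA hdisj (hLint.integrableOn)
  have hR : ∫ ω, (f s) ^ gwProcess ξ n ω ∂μ
      = ∑' j, ∫ ω in A j, (f s) ^ gwProcess ξ n ω ∂μ := by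
    rw [← setIntegral_univ (μ := μ), ← hcover]
    exact integral_iUnion hA hdisj (hRint.integrableOn)
  rw [hL, hR]
  congr 1
  funext j
  have h1 : ∫ ω in A j, s ^ gwProcess ξ (n+1) ω ∂μ
      = ∫ ω in A j, (∏ i ∈ Finset.range j, s ^ ξ n i ω) ∂μ := by
    refine setIntegral_congr_fun (hA j) (fun ω hω => ?_)
    have hωj : gwProcess ξ n ω = j := hω
    show s ^ gwProcess ξ (n+1) ω = ∏ i ∈ Finset.range j, s ^ ξ n i ω
    have : gwProcess ξ (n+1) ω = ∑ i ∈ Finset.range j, ξ n i ω := by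
      show (∑ i ∈ Finset.range (gwProcess ξ n ω), ξ n i ω) = _
      rw [hωj]
    rw [this, ← Finset.prod_pow_eq_pow_sum]
  have h2 : ∫ ω in A j, (f s) ^ gwProcess ξ n ω ∂μ
      = (μ (A j)).toReal * (f s) ^ j := by
    have : ∫ ω in A j, (f s) ^ gwProcess ξ n ω ∂μ = ∫ _ω in A j, (f s) ^ j ∂μ := by
      refine setIntegral_congr_fun (hA j) (fun ω hω => ?_)
      have hωj : gwProcess ξ n ω = j := hω
      simp [hωj]
    rw [this, setIntegral_const, smul_eq_mul, measureReal_def]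
  rw [h1, h2, gw_setIntegral μ ξ p f hmeas hindep hp hdist hf hs n j]

end Prob3


section Analysis

variable (p : ℕ → ℝ) (f : ℝ → ℝ)

lemma gw_f_one (hpsum : HasSum p 1)
    (hf : ∀ s ∈ Set.Icc (0 : ℝ) 1, HasSum (fun k => p k * s ^ k) (f s)) : f 1 = 1 := by
  have h := hf 1 (by norm_num)
  simp only [one_pow, mul_one] at h
  exact h.unique hpsum

lemma gw_f_mono (hp : ∀ k, 0 ≤ p k)
    (hf : ∀ s ∈ Set.Icc (0 : ℝ) 1, HasSum (fun k => p k * s ^ k) (f s)) :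
    ∀ s ∈ Set.Icc (0:ℝ) 1, ∀ t ∈ Set.Icc (0:ℝ) 1, s ≤ t → f s ≤ f t := by
  intro s hs t ht hst
  refine hasSum_le (fun k => ?_) (hf s hs) (hf t ht)
  exact mul_le_mul_of_nonneg_left (pow_le_pow_left₀ hs.1 hst k) (hp k)

lemma gw_f_mem (hp : ∀ k, 0 ≤ p k) (hpsum : HasSum p 1)
    (hf : ∀ s ∈ Set.Icc (0 : ℝ) 1, HasSum (fun k => p k * s ^ k) (f s)) :
    ∀ s ∈ Set.Icc (0:ℝ) 1, f s ∈ Set.Icc (0:ℝ) 1 := by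
  intro s hs
  constructor
  · exact (hf s hs).nonneg (fun k => mul_nonneg (hp k) (pow_nonneg hs.1 k))
  · rw [← gw_f_one p f hpsum hf]
    exact gw_f_mono p f hp hf s hs 1 (by norm_num) hs.2

/-- key identity: `(1 - f s)/(1 - s) = ∑ p_k (1 + s + ... + s^{k-1})` -/
lemma gw_key (hpsum : HasSum p 1)
    (hf : ∀ s ∈ Set.Icc (0 : ℝ) 1, HasSum (fun k => p k * s ^ k) (f s))
    {s : ℝ} (hs : s ∈ Set.Ico (0:ℝ) 1) :
    HasSum (fun k => p k * ∑ j ∈ range k, s ^ j) ((1 - f s) / (1 - s)) := by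
  have hsne : 1 - s ≠ 0 := by have := hs.2; intro h; nlinarith
  have h1 : HasSum (fun k => p k - p k * s ^ k) (1 - f s) :=
    hpsum.sub (hf s ⟨hs.1, hs.2.le⟩)
  have h2 : ∀ k, p k - p k * s ^ k = (p k * ∑ j ∈ range k, s ^ j) * (1 - s) := by
    intro k
    have hg : (∑ j ∈ range k, s ^ j) * (1 - s) = 1 - s ^ k := by
      linear_combination -geom_sum_mul s k
    rw [mul_assoc, hg]
    ring
  simp_rw [h2] at h1
  have := h1.div_const (1 - s)
  simpa [mul_div_assoc, div_self hsne] using this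

lemma gw_subcritical (hp : ∀ k, 0 ≤ p k) (hpsum : HasSum p 1) (hp1 : p 1 < 1)
    {m : ℝ} (hm : HasSum (fun k : ℕ => (k : ℝ) * p k) m) (hm1 : m ≤ 1)
    (hf : ∀ s ∈ Set.Icc (0 : ℝ) 1, HasSum (fun k => p k * s ^ k) (f s))
    {s : ℝ} (hs : s ∈ Set.Ico (0:ℝ) 1) : s < f s := by
  have hkey := gw_key p f hpsum hf hs
  have hlt : (1 - f s) / (1 - s) < 1 := by
    by_cases hbig : ∃ k, 2 ≤ k ∧ 0 < p k
    · obtain ⟨k0, hk0, hpk0⟩ := hbig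
      have hle : ∀ k, p k * ∑ j ∈ range k, s ^ j ≤ (k : ℝ) * p k := by
        intro k
        have : ∑ j ∈ range k, s ^ j ≤ (k : ℝ) := by
          calc ∑ j ∈ range k, s ^ j ≤ ∑ j ∈ range k, 1 :=
                Finset.sum_le_sum (fun j _ => pow_le_one₀ hs.1 hs.2.le)
            _ = (k : ℝ) := by simp
        calc p k * ∑ j ∈ range k, s ^ j ≤ p k * k :=
              mul_le_mul_of_nonneg_left this (hp k)
          _ = (k : ℝ) * p k := mul_comm _ _
      have hstrict : p k0 * ∑ j ∈ range k0, s ^ j < (k0 : ℝ) * p k0 := by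
        have hsum_lt : ∑ j ∈ range k0, s ^ j < (k0 : ℝ) := by
          have h1mem : (1 : ℕ) ∈ range k0 := by
            simp [Finset.mem_range]; omega
          calc ∑ j ∈ range k0, s ^ j < ∑ j ∈ range k0, 1 := by
                refine Finset.sum_lt_sum (fun j _ => pow_le_one₀ hs.1 hs.2.le) ⟨1, h1mem, ?_⟩
                simpa using hs.2
            _ = (k0 : ℝ) := by simp
        calc p k0 * ∑ j ∈ range k0, s ^ j < p k0 * k0 :=
              (mul_lt_mul_iff_right₀ hpk0).mpr hsum_lt
          _ = (k0 : ℝ) * p k0 := mul_comm _ _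
      exact lt_of_lt_of_le (hasSum_lt hle hstrict hkey hm) hm1
    · push_neg at hbig
      have hzero : ∀ k, k ≠ 1 → p k * ∑ j ∈ range k, s ^ j = 0 := by
        intro k hk
        match k, hk with
        | 0, _ => simp
        | (j+2), _ =>
          have h0 : p (j+2) = 0 := le_antisymm (hbig _ (by omega)) (hp _)
          simp [h0]
        | 1, hk => exact absurd rfl hk
      have : HasSum (fun k => p k * ∑ j ∈ range k, s ^ j) (p 1 * ∑ j ∈ range 1, s ^ j) :=
        hasSum_single 1 hzero
      have heq := hkey.unique this
      rw [heq]
      simpa using hp1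
  have hpos : (0:ℝ) < 1 - s := by have := hs.2; linarith
  rw [div_lt_one hpos] at hlt
  linarith

lemma gw_continuousOn
    (hp : ∀ k, 0 ≤ p k) (hpsum : HasSum p 1)
    (hf : ∀ s ∈ Set.Icc (0 : ℝ) 1, HasSum (fun k => p k * s ^ k) (f s)) :
    ContinuousOn f (Set.Icc (0:ℝ) 1) := by
  have hunif : TendstoUniformlyOn (fun (N : ℕ) (x : ℝ) => ∑ k ∈ range N, p k * x ^ k)
      (fun x => ∑' k, p k * x ^ k) Filter.atTop (Set.Icc (0:ℝ) 1) := by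
    refine tendstoUniformlyOn_tsum_nat hpsum.summable (fun k x hx => ?_)
    rw [Real.norm_eq_abs, abs_mul, abs_of_nonneg (hp k), abs_pow]
    have : |x| ≤ 1 := abs_le.mpr ⟨by linarith [hx.1], hx.2⟩
    calc p k * |x| ^ k ≤ p k * 1 := mul_le_mul_of_nonneg_left (pow_le_one₀ (abs_nonneg x) this) (hp k)
      _ = p k := mul_one _
  have hcont : ContinuousOn (fun x => ∑' k, p k * x ^ k) (Set.Icc (0:ℝ) 1) := by
    refine hunif.continuousOn (Filter.Eventually.of_forall (fun N => ?_)).frequently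
    exact (continuous_finset_sum _ (fun k _ => by continuity)).continuousOn
  refine hcont.congr (fun x hx => ?_)
  exact ((hf x hx).tsum_eq).symm

end Analysis

section B
variable (p : ℕ → ℝ) (f : ℝ → ℝ)

lemma gw_supercritical (hp : ∀ k, 0 ≤ p k) (hpsum : HasSum p 1)
    {m : ℝ} (hm : HasSum (fun k : ℕ => (k : ℝ) * p k) m) (hm1 : 1 < m)
    (hf : ∀ s ∈ Set.Icc (0 : ℝ) 1, HasSum (fun k => p k * s ^ k) (f s)) :
    ∃ s₀ ∈ Set.Ico (0:ℝ) 1, f s₀ < s₀ := by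
  -- find N with partial sum > 1
  have htd := hm.tendsto_sum_nat
  have hev : ∀ᶠ N in Filter.atTop, 1 < ∑ k ∈ range N, (k : ℝ) * p k :=
    htd.eventually (eventually_gt_nhds hm1)
  obtain ⟨N, hN⟩ := hev.exists
  -- the finite partial sum function
  set φ : ℝ → ℝ := fun s => ∑ k ∈ range N, p k * ∑ j ∈ range k, s ^ j with hφ
  have hφcont : Continuous φ := by
    apply continuous_finset_sum
    intro k _
    exact continuous_const.mul (continuous_finset_sum _ (fun j _ => by continuity))
  have hφ1 : 1 < φ 1 := by
    have : φ 1 = ∑ k ∈ range N, (k : ℝ) * p k := by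
      apply Finset.sum_congr rfl
      intro k _
      simp [mul_comm]
    rw [this]; exact hN
  -- find s₀ < 1 with φ s₀ > 1
  have hev2 : ∀ᶠ s in nhdsWithin 1 (Set.Iio 1), 1 < φ s :=
    ((hφcont.tendsto 1).eventually (eventually_gt_nhds hφ1)).filter_mono nhdsWithin_le_nhds
  have hev3 : ∀ᶠ s in nhdsWithin 1 (Set.Iio 1), s ∈ Set.Ioo (0:ℝ) 1 :=
    Ioo_mem_nhdsLT_of_mem (by norm_num : (1:ℝ) ∈ Set.Ioc (0:ℝ) 1)
  obtain ⟨s₀, hs₀φ, hs₀⟩ := (hev2.and hev3).exists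
  refine ⟨s₀, ⟨hs₀.1.le, hs₀.2⟩, ?_⟩
  have hkey := gw_key p f hpsum hf ⟨hs₀.1.le, hs₀.2⟩
  -- partial sum ≤ total sum
  have hle : φ s₀ ≤ (1 - f s₀) / (1 - s₀) := by
    refine sum_le_hasSum (range N) (fun k _ => ?_) hkey
    exact mul_nonneg (hp k) (Finset.sum_nonneg (fun j _ => pow_nonneg hs₀.1.le j))
  have h1 : 1 < (1 - f s₀) / (1 - s₀) := lt_of_lt_of_le hs₀φ hle
  have hpos : (0:ℝ) < 1 - s₀ := by linarith [hs₀.2]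
  rw [lt_div_iff₀ hpos] at h1
  linarith

lemma gw_exists_fixed_lt_one (hp : ∀ k, 0 ≤ p k) (hpsum : HasSum p 1)
    {m : ℝ} (hm : HasSum (fun k : ℕ => (k : ℝ) * p k) m) (hm1 : 1 < m)
    (hf : ∀ s ∈ Set.Icc (0 : ℝ) 1, HasSum (fun k => p k * s ^ k) (f s)) :
    ∃ t ∈ Set.Ico (0:ℝ) 1, f t = t := by
  obtain ⟨s₀, hs₀, hfs₀⟩ := gw_supercritical p f hp hpsum hm hm1 hf
  have hcont : ContinuousOn (fun t => f t - t) (Set.Icc 0 s₀) := by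
    refine ContinuousOn.sub ?_ continuousOn_id
    exact (gw_continuousOn p f hp hpsum hf).mono
      (Set.Icc_subset_Icc le_rfl hs₀.2.le)
  have hg0 : 0 ≤ f 0 - 0 := by
    have := (gw_f_mem p f hp hpsum hf) 0 (by norm_num)
    simpa using this.1
  have hgs₀ : f s₀ - s₀ < 0 := by linarith
  have hsub : (0:ℝ) ∈ Set.Icc (f s₀ - s₀) (f 0 - 0) := ⟨hgs₀.le, hg0⟩
  have := intermediate_value_Icc' hs₀.1 hcont hsub
  obtain ⟨t, ht, htfix⟩ := this
  have htfix2 : f t - t = 0 := htfix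
  exact ⟨t, ⟨ht.1, lt_of_le_of_lt ht.2 hs₀.2⟩, by linarith⟩

end B
section Final
variable {Ω : Type*} [MeasurableSpace Ω] (μ : Measure Ω) [IsProbabilityMeasure μ]
  (ξ : ℕ → ℕ → Ω → ℕ) (p : ℕ → ℝ) (f : ℝ → ℝ)

lemma gw_iterate (hmeas : ∀ n i, Measurable (ξ n i))
    (hindep : ProbabilityTheory.iIndepFun
      (fun q : ℕ × ℕ => ξ q.1 q.2) μ)
    (hp : ∀ k, 0 ≤ p k) (hpsum : HasSum p 1)
    (hdist : ∀ n i k, μ {ω | ξ n i ω = k} = ENNReal.ofReal (p k))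
    (hf : ∀ s ∈ Set.Icc (0 : ℝ) 1, HasSum (fun k => p k * s ^ k) (f s)) :
    ∀ n, ∀ s ∈ Set.Icc (0:ℝ) 1, ∫ ω, s ^ gwProcess ξ n ω ∂μ = f^[n] s := by
  intro n
  induction n with
  | zero =>
    intro s _
    show ∫ _ω, s ^ (1:ℕ) ∂μ = s
    simp
  | succ n ih =>
    intro s hs
    have hfs := gw_f_mem p f hp hpsum hf s hs
    rw [gw_step μ ξ p f hmeas hindep hp hdist hf hs n hfs, ih (f s) hfs,
      Function.iterate_succ_apply]

lemma gw_zero_prob (hmeas : ∀ n i, Measurable (ξ n i)) (n : ℕ) :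
    ∫ ω, (0:ℝ) ^ gwProcess ξ n ω ∂μ = (μ (gwProcess ξ n ⁻¹' {0})).toReal := by
  have hA : MeasurableSet (gwProcess ξ n ⁻¹' {0}) :=
    gw_meas_amb ξ hmeas n (measurableSet_singleton 0)
  have heq : (fun ω => (0:ℝ) ^ gwProcess ξ n ω)
      = (gwProcess ξ n ⁻¹' {0}).indicator (fun _ => (1:ℝ)) := by
    funext ω
    by_cases h : gwProcess ξ n ω = 0
    · simp [h, Set.indicator_of_mem, Set.mem_preimage]
    · rw [zero_pow h, Set.indicator_of_notMem (by simpa using h)]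
  rw [heq, integral_indicator_const (1:ℝ) hA, smul_eq_mul, mul_one, measureReal_def]

end Final
/-- Galton–Watson extinction criterion: the extinction probability `q` is the smallest
fixed point in `[0,1]` of the offspring generating function `f(s) = ∑ p_k s^k`;
moreover `q = 1` if the mean `m ≤ 1` and `q < 1` if `m > 1`. -/
theorem galton_watson_extinction
    {Ω : Type*} [MeasurableSpace Ω] (μ : Measure Ω) [IsProbabilityMeasure μ]
    (p : ℕ → ℝ) (hp : ∀ k, 0 ≤ p k) (hpsum : HasSum p 1) (hp1 : p 1 < 1)
    (m : ℝ) (hm : HasSum (fun k : ℕ => (k : ℝ) * p k) m)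
    (ξ : ℕ → ℕ → Ω → ℕ) (hmeas : ∀ n i, Measurable (ξ n i))
    (hindep : ProbabilityTheory.iIndepFun
      (fun q : ℕ × ℕ => ξ q.1 q.2) μ)
    (hdist : ∀ n i k, μ {ω | ξ n i ω = k} = ENNReal.ofReal (p k))
    (f : ℝ → ℝ) (hf : ∀ s ∈ Set.Icc (0 : ℝ) 1, HasSum (fun k => p k * s ^ k) (f s))
    (q : ℝ) (hq : q = (μ {ω | ∃ n, gwProcess ξ n ω = 0}).toReal) :
    q ∈ Set.Icc (0 : ℝ) 1 ∧ f q = q ∧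
      (∀ s ∈ Set.Icc (0 : ℝ) 1, f s = s → q ≤ s) ∧
      (m ≤ 1 → q = 1) ∧ (1 < m → q < 1) := by
  have hicc0 : (0:ℝ) ∈ Set.Icc (0:ℝ) 1 := by norm_num
  -- the iterates
  have hiter_mem : ∀ n, f^[n] 0 ∈ Set.Icc (0:ℝ) 1 := by
    intro n
    induction n with
    | zero => simpa using hicc0
    | succ n ih =>
      rw [Function.iterate_succ_apply']
      exact gw_f_mem p f hp hpsum hf _ ih
  -- events
  set A : ℕ → Set Ω := fun n => gwProcess ξ n ⁻¹' {0} with hAdef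
  have hAmono : Monotone A := by
    refine monotone_nat_of_le_succ (fun n ω hω => ?_)
    have h0 : gwProcess ξ n ω = 0 := hω
    show gwProcess ξ (n+1) ω = 0
    show (∑ i ∈ Finset.range (gwProcess ξ n ω), ξ n i ω) = 0
    rw [h0]
    simp
  have hEeq : {ω | ∃ n, gwProcess ξ n ω = 0} = ⋃ n, A n := by
    ext ω; simp [hAdef]
  have htd : Filter.Tendsto (fun n => μ (A n)) Filter.atTop (nhds (μ (⋃ n, A n))) :=
    tendsto_measure_iUnion_atTop hAmono
  have hqtop : q = (μ (⋃ n, A n)).toReal := by rw [hq, hEeq]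
  have hqn : Filter.Tendsto (fun n => (μ (A n)).toReal) Filter.atTop (nhds q) := by
    rw [hqtop]
    exact (ENNReal.tendsto_toReal (measure_ne_top μ _)).comp htd
  have hqn_eq : ∀ n, (μ (A n)).toReal = f^[n] 0 := by
    intro n
    rw [← gw_zero_prob μ ξ hmeas n]
    exact gw_iterate μ ξ p f hmeas hindep hp hpsum hdist hf n 0 hicc0
  have hiter_td : Filter.Tendsto (fun n => f^[n] 0) Filter.atTop (nhds q) := by
    have := hqn
    simp_rw [hqn_eq] at this
    exact this
  -- q ∈ [0,1]
  have hqmem : q ∈ Set.Icc (0:ℝ) 1 := by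
    constructor
    · exact ge_of_tendsto hiter_td (Filter.Eventually.of_forall (fun n => (hiter_mem n).1))
    · exact le_of_tendsto hiter_td (Filter.Eventually.of_forall (fun n => (hiter_mem n).2))
  -- f q = q
  have hcont := gw_continuousOn p f hp hpsum hf
  have hfq : f q = q := by
    have h1 : Filter.Tendsto (fun n => f^[n] 0) Filter.atTop
        (nhdsWithin q (Set.Icc (0:ℝ) 1)) :=
      tendsto_nhdsWithin_of_tendsto_nhds_of_eventually_within _ hiter_td
        (Filter.Eventually.of_forall hiter_mem)
    have h2 : Filter.Tendsto (fun n => f (f^[n] 0)) Filter.atTop (nhds (f q)) :=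
      ((hcont q hqmem).tendsto).comp h1
    have h3 : Filter.Tendsto (fun n => f^[n+1] 0) Filter.atTop (nhds q) :=
      hiter_td.comp (Filter.tendsto_add_atTop_nat 1)
    have h4 : (fun n => f (f^[n] 0)) = fun n => f^[n+1] 0 := by
      funext n
      rw [Function.iterate_succ_apply']
    rw [h4] at h2
    exact tendsto_nhds_unique h2 h3
  -- minimality
  have hmin : ∀ s ∈ Set.Icc (0:ℝ) 1, f s = s → q ≤ s := by
    intro s hs hfs
    have hle : ∀ n, f^[n] 0 ≤ s := by
      intro n
      induction n with
      | zero => simpa using hs.1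
      | succ n ih =>
        rw [Function.iterate_succ_apply']
        calc f (f^[n] 0) ≤ f s :=
              gw_f_mono p f hp hf _ (hiter_mem n) s hs ih
          _ = s := hfs
    exact le_of_tendsto hiter_td (Filter.Eventually.of_forall hle)
  refine ⟨hqmem, hfq, hmin, ?_, ?_⟩
  · -- subcritical/critical
    intro hm1
    by_contra hne
    have hqlt : q < 1 := lt_of_le_of_ne hqmem.2 hne
    have := gw_subcritical p f hp hpsum hp1 hm hm1 hf ⟨hqmem.1, hqlt⟩
    rw [hfq] at this
    exact lt_irrefl q this
  · -- supercritical
    intro hm1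
    obtain ⟨t, ht, htfix⟩ := gw_exists_fixed_lt_one p f hp hpsum hm hm1 hf
    exact lt_of_le_of_lt (hmin t ⟨ht.1, ht.2.le⟩ htfix) ht.2
end

section
/- (Pollaczek–Khinchine mean formula) In a stationary M/G/1 queue with Poisson arrival rate λ, service times with mean E[S] and second moment E[S²], and utilization ρ = λE[S] < 1, the mean number of customers in the system is L = ρ + λ²E[S²]/(2(1−ρ)). -/
open MeasureTheory Filter Topology

set_option maxHeartbeats 1600000

section Helpers

/-- Convert an ENNReal tsum identity to a real HasSum. -/
lemma hasSum_of_ennreal (u : ℕ → ℝ) (hu : ∀ n, 0 ≤ u n) (s : ℝ) (hs : 0 ≤ s)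
    (h : ∑' n, ENNReal.ofReal (u n) = ENNReal.ofReal s) : HasSum u s := by
  have hne : (∑' n, ENNReal.ofReal (u n)) ≠ ⊤ := by
    rw [h]; exact ENNReal.ofReal_ne_top
  have hsumm : Summable u := by
    have h2 := ENNReal.summable_toReal hne
    exact h2.congr fun n => ENNReal.toReal_ofReal (hu n)
  have h3 : ∑' n, u n = s := by
    have h4 := congrArg ENNReal.toReal h
    rw [ENNReal.toReal_ofReal hs, ENNReal.tsum_toReal_eq (fun n => ENNReal.ofReal_ne_top)] at h4
    simpa [fun n => ENNReal.toReal_ofReal (hu n)] using h4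
  exact h3 ▸ hsumm.hasSum

lemma ennreal_count (W C : ℕ → ENNReal) :
    ∑' k, W k * ∑' m, C (k + 1 + m) = ∑' n, (∑ k ∈ Finset.range n, W k) * C n := by
  have e2 : ∀ n : ℕ, ∑ q ∈ Finset.HasAntidiagonal.antidiagonal n, W q.1 * C (q.1 + 1 + q.2)
      = (∑ k ∈ Finset.range (n + 1), W k) * C (n + 1) := by
    intro n
    have : ∀ q ∈ Finset.HasAntidiagonal.antidiagonal n, W q.1 * C (q.1 + 1 + q.2) = W q.1 * C (n + 1) := by
      intro q hq
      rw [Finset.HasAntidiagonal.mem_antidiagonal] at hq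
      have : q.1 + 1 + q.2 = n + 1 := by omega
      rw [this]
    rw [Finset.sum_congr rfl this,
      Finset.Nat.sum_antidiagonal_eq_sum_range_succ_mk (fun q => W q.1 * C (n + 1)) n,
      Finset.sum_mul]
  have e3 : ∑' n, (∑ k ∈ Finset.range n, W k) * C n
      = ∑' n : ℕ, (∑ k ∈ Finset.range (n + 1), W k) * C (n + 1) := by
    rw [tsum_eq_zero_add' (f := fun n => (∑ k ∈ Finset.range n, W k) * C n)
      ENNReal.summable]
    simp
  calc ∑' k, W k * ∑' m, C (k + 1 + m)
      = ∑' k, ∑' m, W k * C (k + 1 + m) := tsum_congr fun k => (ENNReal.tsum_mul_left).symm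
    _ = ∑' (q : ℕ × ℕ), W q.1 * C (q.1 + 1 + q.2) :=
        (ENNReal.tsum_prod (f := fun k m => W k * C (k + 1 + m))).symm
    _ = ∑' (x : Σ n : ℕ, Finset.HasAntidiagonal.antidiagonal n),
          (fun q : ℕ × ℕ => W q.1 * C (q.1 + 1 + q.2)) (Finset.HasAntidiagonal.sigmaAntidiagonalEquivProd x) :=
        (Finset.HasAntidiagonal.sigmaAntidiagonalEquivProd.tsum_eq
          (fun q : ℕ × ℕ => W q.1 * C (q.1 + 1 + q.2))).symm
    _ = ∑' n : ℕ, ∑' (q : (Finset.HasAntidiagonal.antidiagonal n : Finset (ℕ × ℕ))),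
          W (q : ℕ × ℕ).1 * C ((q : ℕ × ℕ).1 + 1 + (q : ℕ × ℕ).2) := by
        rw [ENNReal.tsum_sigma']
        rfl
    _ = ∑' n : ℕ, ∑ q ∈ Finset.HasAntidiagonal.antidiagonal n, W q.1 * C (q.1 + 1 + q.2) :=
        tsum_congr fun n => Finset.tsum_subtype (Finset.HasAntidiagonal.antidiagonal n)
          (fun q : ℕ × ℕ => W q.1 * C (q.1 + 1 + q.2))
    _ = ∑' n : ℕ, (∑ k ∈ Finset.range (n + 1), W k) * C (n + 1) := tsum_congr e2
    _ = ∑' n, (∑ k ∈ Finset.range n, W k) * C n := e3.symm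

/-- tail sums with weights. -/
lemma tail_counting (c w : ℕ → ℝ) (hc : ∀ n, 0 ≤ c n) (hw : ∀ n, 0 ≤ w n)
    (hsc : Summable c) (hs : Summable (fun n => (∑ k ∈ Finset.range n, w k) * c n)) :
    HasSum (fun k => w k * ∑' m, c (k + 1 + m)) (∑' n, (∑ k ∈ Finset.range n, w k) * c n) := by
  have hscshift : ∀ k : ℕ, Summable (fun m => c (k + 1 + m)) := by
    intro k
    have := (summable_nat_add_iff (k+1)).2 hsc
    exact this.congr fun m => by rw [add_comm m (k+1)]
  have h2 : ∑' k, ENNReal.ofReal (w k * ∑' m, c (k + 1 + m))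
      = ENNReal.ofReal (∑' n, (∑ k ∈ Finset.range n, w k) * c n) := by
    calc ∑' k, ENNReal.ofReal (w k * ∑' m, c (k + 1 + m))
        = ∑' k, ENNReal.ofReal (w k) * ∑' m, ENNReal.ofReal (c (k + 1 + m)) :=
          tsum_congr fun k => by
            rw [ENNReal.ofReal_mul (hw k),
              ENNReal.ofReal_tsum_of_nonneg (fun m => hc _) (hscshift k)]
      _ = ∑' n, (∑ k ∈ Finset.range n, ENNReal.ofReal (w k)) * ENNReal.ofReal (c n) :=
          ennreal_count (fun n => ENNReal.ofReal (w n)) (fun n => ENNReal.ofReal (c n))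
      _ = ∑' n, ENNReal.ofReal ((∑ k ∈ Finset.range n, w k) * c n) :=
          tsum_congr fun n => by
            rw [ENNReal.ofReal_mul (Finset.sum_nonneg fun k _ => hw k),
              ENNReal.ofReal_sum_of_nonneg (fun k _ => hw k)]
      _ = ENNReal.ofReal (∑' n, (∑ k ∈ Finset.range n, w k) * c n) :=
          (ENNReal.ofReal_tsum_of_nonneg
            (fun n => mul_nonneg (Finset.sum_nonneg fun k _ => hw k) (hc n)) hs).symm
  exact hasSum_of_ennreal _ (fun k => mul_nonneg (hw k) (tsum_nonneg fun m => hc _)) _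
    (tsum_nonneg fun n => mul_nonneg (Finset.sum_nonneg fun k _ => hw k) (hc n)) h2

end Helpers

section Helpers2

variable {c : ℕ → ℝ}

lemma summable_shift (hsc : Summable c) (k : ℕ) : Summable (fun m => c (k + 1 + m)) := by
  have := (summable_nat_add_iff (k+1)).2 hsc
  exact this.congr fun m => by rw [add_comm m (k+1)]

lemma tail_nonneg (hb : ∀ n, 0 ≤ c n) (k : ℕ) : 0 ≤ ∑' m, c (k + 1 + m) :=
  tsum_nonneg fun m => hb _

lemma tail_le (hsc : Summable c) (hb : ∀ n, 0 ≤ c n) (k : ℕ) :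
    ∑' m, c (k + 1 + m) ≤ ∑' n, c n := by
  refine Summable.tsum_le_tsum_of_inj (fun m => k + 1 + m) (fun x y h => by simpa using h)
    (fun n _ => hb n) (fun m => le_refl _) (summable_shift hsc k) hsc

lemma tail_succ (hsc : Summable c) (k : ℕ) :
    ∑' m, c (k + 1 + m) = c (k + 1) + ∑' m, c (k + 2 + m) := by
  rw [Summable.tsum_eq_zero_add (summable_shift hsc k)]
  congr 1
  exact tsum_congr fun m => by congr 1; omega

lemma summable_pow_mul (hsc : Summable c) (hb : ∀ n, 0 ≤ c n) {z : ℝ} (hz0 : 0 ≤ z)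
    (hz1 : z ≤ 1) : Summable (fun n => c n * z ^ n) := by
  refine Summable.of_nonneg_of_le (fun n => mul_nonneg (hb n) (pow_nonneg hz0 n)) ?_ hsc
  intro n
  calc c n * z ^ n ≤ c n * 1 :=
        mul_le_mul_of_nonneg_left (pow_le_one₀ hz0 hz1) (hb n)
    _ = c n := mul_one _

/-- Tail generating function identity: `(1-z) * ∑ T_k z^k = S - ∑ c_n z^n`. -/
lemma tail_gf (hsc : Summable c) (hb : ∀ n, 0 ≤ c n) {S : ℝ} (hS : HasSum c S)
    {z : ℝ} (hz0 : 0 ≤ z) (hz1 : z < 1) :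
    (1 - z) * (∑' k, (∑' m, c (k + 1 + m)) * z ^ k) = S - ∑' n, c n * z ^ n := by
  set T : ℕ → ℝ := fun k => ∑' m, c (k + 1 + m) with hT
  have hTs : Summable (fun k => T k * z ^ k) := by
    refine Summable.of_nonneg_of_le
      (fun k => mul_nonneg (tail_nonneg hb k) (pow_nonneg hz0 k))
      (fun k => mul_le_mul_of_nonneg_right (tail_le hsc hb k) (pow_nonneg hz0 k)) ?_
    exact (summable_geometric_of_lt_one hz0 hz1).mul_left (∑' n, c n)
  have hTs1 : Summable (fun k => T (k + 1) * z ^ (k + 1)) := by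
    have := (summable_nat_add_iff (f := fun k => T k * z ^ k) 1).2 hTs
    exact this
  have hTs2 : Summable (fun k => T k * z ^ (k + 1)) := by
    have := hTs.mul_left z
    exact this.congr fun k => by ring
  have hcz : Summable (fun n => c n * z ^ n) := summable_pow_mul hsc hb hz0 (le_of_lt hz1)
  have hcz1 : Summable (fun k => c (k + 1) * z ^ (k + 1)) := by
    have := (summable_nat_add_iff (f := fun k => c k * z ^ k) 1).2 hcz
    exact this
  have e1 : ∑' k, T k * z ^ k = T 0 + ∑' k, T (k + 1) * z ^ (k + 1) := by
    rw [Summable.tsum_eq_zero_add hTs]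
    simp only [pow_zero, mul_one]
  have e2 : z * ∑' k, T k * z ^ k = ∑' k, T k * z ^ (k + 1) := by
    rw [← tsum_mul_left]
    exact tsum_congr fun k => by ring
  have e3 : ∀ k : ℕ, T (k + 1) * z ^ (k + 1) - T k * z ^ (k + 1)
      = -(c (k + 1) * z ^ (k + 1)) := by
    intro k
    have h4 : T k = c (k + 1) + T (k + 1) := by
      have := tail_succ hsc k
      rw [hT]
      simp only []
      rw [this]
    rw [h4]; ring
  have e4 : ∑' n, c n * z ^ n = c 0 + ∑' k, c (k + 1) * z ^ (k + 1) := by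
    rw [Summable.tsum_eq_zero_add hcz]
    simp only [pow_zero, mul_one]
  have e5 : T 0 + c 0 = S := by
    have h6 := Summable.tsum_eq_zero_add hsc
    rw [hS.tsum_eq] at h6
    have h0 : T 0 = ∑' m, c (m + 1) := tsum_congr fun m => by congr 1; omega
    rw [h0]
    linarith
  calc (1 - z) * ∑' k, T k * z ^ k
      = 1 * (∑' k, T k * z ^ k) - z * ∑' k, T k * z ^ k := by rw [sub_mul]
    _ = (T 0 + ∑' k, T (k + 1) * z ^ (k + 1)) - ∑' k, T k * z ^ (k + 1) := by
        rw [one_mul, e2, e1]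
    _ = T 0 + ((∑' k, T (k + 1) * z ^ (k + 1)) - ∑' k, T k * z ^ (k + 1)) := by ring
    _ = T 0 + ∑' k, (T (k + 1) * z ^ (k + 1) - T k * z ^ (k + 1)) := by
        rw [Summable.tsum_sub hTs1 hTs2]
    _ = T 0 - ∑' k, c (k + 1) * z ^ (k + 1) := by
        rw [tsum_congr e3, tsum_neg]; ring
    _ = S - ∑' n, c n * z ^ n := by rw [e4]; linarith
/-- Abel-type limit for nonneg coefficients. -/
lemma abel_nonneg (hb : ∀ n, 0 ≤ c n) {S : ℝ} (hS : HasSum c S) :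
    Tendsto (fun z : ℝ => ∑' n, c n * z ^ n) (𝓝[Set.Ioo (0:ℝ) 1] 1) (𝓝 S) := by
  rw [Metric.tendsto_nhdsWithin_nhds]
  intro ε hε
  have hsc := hS.summable
  obtain ⟨N, hN⟩ : ∃ N : ℕ, S - ε / 2 < ∑ n ∈ Finset.range N, c n := by
    have h1 := hS.tendsto_sum_nat
    have h2 : S - ε / 2 < S := by linarith
    obtain ⟨N, hN⟩ := (h1.eventually (eventually_gt_nhds h2)).exists
    exact ⟨N, hN⟩
  have hg : ContinuousAt (fun z : ℝ => ∑ n ∈ Finset.range N, c n * z ^ n) 1 :=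
    (continuous_finset_sum _ fun n _ => continuous_const.mul (continuous_pow n)).continuousAt
  rw [Metric.continuousAt_iff] at hg
  obtain ⟨δ, hδ0, hδ⟩ := hg (ε / 2) (by linarith)
  refine ⟨δ, hδ0, ?_⟩
  intro z hz hzd
  obtain ⟨hz0, hz1⟩ := hz
  have hzsum : Summable (fun n => c n * z ^ n) :=
    summable_pow_mul hsc hb (le_of_lt hz0) (le_of_lt hz1)
  have hub : ∑' n, c n * z ^ n ≤ S := by
    rw [← hS.tsum_eq]
    refine Summable.tsum_le_tsum (fun n => ?_) hzsum hsc
    calc c n * z ^ n ≤ c n * 1 :=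
        mul_le_mul_of_nonneg_left (pow_le_one₀ (le_of_lt hz0) (le_of_lt hz1)) (hb n)
      _ = c n := mul_one _
  have hlb : ∑ n ∈ Finset.range N, c n * z ^ n ≤ ∑' n, c n * z ^ n :=
    Summable.sum_le_tsum _ (fun n _ => mul_nonneg (hb n) (pow_nonneg (le_of_lt hz0) n)) hzsum
  have hg2 : |(∑ n ∈ Finset.range N, c n * z ^ n) - ∑ n ∈ Finset.range N, c n * (1:ℝ) ^ n|
      < ε / 2 := by
    have := hδ hzd
    simpa [Real.dist_eq] using this
  have hg3 : S - ε < ∑ n ∈ Finset.range N, c n * z ^ n := by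
    have h1 : ∑ n ∈ Finset.range N, c n * (1:ℝ) ^ n = ∑ n ∈ Finset.range N, c n := by simp
    have h2 := abs_lt.1 hg2
    rw [h1] at h2
    linarith [h2.1]
  rw [Real.dist_eq, abs_lt]
  constructor <;> linarith

end Helpers2

lemma hasSum_integral (μ : Measure ℝ) (g : ℕ → ℝ → ℝ) (G : ℝ → ℝ)
    (hgi : ∀ k, Integrable (g k) μ) (hGi : Integrable G μ)
    (h0 : ∀ᵐ t ∂μ, ∀ k, 0 ≤ g k t)
    (hsum : ∀ᵐ t ∂μ, HasSum (fun k => g k t) (G t)) :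
    HasSum (fun k => ∫ t, g k t ∂μ) (∫ t, G t ∂μ) := by
  rw [hasSum_iff_tendsto_nat_of_nonneg
    (fun k => integral_nonneg_of_ae (h0.mono (fun t ht => ht k)))]
  have heq : ∀ n : ℕ, ∑ k ∈ Finset.range n, ∫ t, g k t ∂μ
      = ∫ t, ∑ k ∈ Finset.range n, g k t ∂μ :=
    fun n => (integral_finset_sum _ (fun k _ => hgi k)).symm
  simp_rw [heq]
  refine integral_tendsto_of_tendsto_of_monotone
    (fun n => integrable_finset_sum _ (fun k _ => hgi k)) hGi ?_ ?_
  · filter_upwards [h0] with t ht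
    intro n m hnm
    exact Finset.sum_le_sum_of_subset_of_nonneg
      (Finset.range_subset_range.2 hnm) (fun k _ _ => ht k)
  · filter_upwards [hsum] with t ht
    exact ht.tendsto_sum_nat

lemma sum_range_cast (n : ℕ) : (∑ k ∈ Finset.range n, (k:ℝ)) = n * (n - 1) / 2 := by
  induction n with
  | zero => simp
  | succ m ih =>
    rw [Finset.sum_range_succ, ih]
    push_cast
    ring

lemma tail_counting_one (hc : ∀ n, 0 ≤ c n) (hsc : Summable c) {S : ℝ}
    (h : HasSum (fun n : ℕ => (n:ℝ) * c n) S) : HasSum (fun k => ∑' m, c (k + 1 + m)) S := by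
  have h1 : Summable (fun n => (∑ k ∈ Finset.range n, (1:ℝ)) * c n) :=
    h.summable.congr fun n => by simp
  have h2 := tail_counting c (fun _ => 1) hc (fun _ => zero_le_one) hsc h1
  have h3 : (∑' n, (∑ k ∈ Finset.range n, (1:ℝ)) * c n) = S := by
    rw [← h.tsum_eq]
    exact tsum_congr fun n => by simp
  rw [h3] at h2
  have h4 : (fun k => (1:ℝ) * ∑' m, c (k + 1 + m)) = fun k => ∑' m, c (k + 1 + m) :=
    funext fun k => one_mul _
  rwa [h4] at h2

lemma tail_counting_id (hc : ∀ n, 0 ≤ c n) (hsc : Summable c) {S : ℝ}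
    (h : HasSum (fun n : ℕ => ((n:ℝ) * ((n:ℝ) - 1) / 2) * c n) S) :
    HasSum (fun k : ℕ => (k:ℝ) * ∑' m, c (k + 1 + m)) S := by
  have h1 : Summable (fun n => (∑ k ∈ Finset.range n, (k:ℝ)) * c n) :=
    h.summable.congr fun n => by rw [sum_range_cast]
  have h2 := tail_counting c (fun k => (k:ℝ)) hc (fun k => Nat.cast_nonneg k) hsc h1
  have h3 : (∑' n, (∑ k ∈ Finset.range n, (k:ℝ)) * c n) = S := by
    rw [← h.tsum_eq]
    exact tsum_congr fun n => by rw [sum_range_cast]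
  rw [h3] at h2
  exact h2.congr fun k => by norm_num

lemma hasSum_congr' {u v : ℕ → ℝ} {s : ℝ} (h : HasSum u s) (he : ∀ n, u n = v n) :
    HasSum v s := by rwa [show u = v from funext he] at h

lemma pk_core (ρ L M2 : ℝ) (p a α β Tp : ℕ → ℝ)
    (hpnn : ∀ n, 0 ≤ p n) (hann : ∀ n, 0 ≤ a n) (hαnn : ∀ n, 0 ≤ α n)
    (hβnn : ∀ n, 0 ≤ β n) (hTpnn : ∀ n, 0 ≤ Tp n)
    (hαdef : ∀ k, α k = ∑' m, a (k + 1 + m))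
    (hβdef : ∀ k, β k = ∑' m, α (k + 1 + m))
    (hTpdef : ∀ k, Tp k = ∑' m, p (k + 1 + m))
    (hpsum : HasSum p 1) (hasum : HasSum a 1) (hαsum : HasSum α ρ)
    (hβsum : HasSum β M2) (hTpsum : HasSum Tp L)
    (hbal : ∀ j, p j = p 0 * a j + ∑ i ∈ Finset.Icc 1 (j + 1), p i * a (j + 1 - i))
    (hstab : ρ < 1) :
    L * (1 - ρ) = (1 - ρ) * ρ + M2 := by
  -- generating function identity E1
  have hE1 : ∀ z : ℝ, z ∈ Set.Ioo (0:ℝ) 1 →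
      (∑' n, p n * z ^ n) * (1 - ∑' k, α k * z ^ k) = p 0 * ∑' n, a n * z ^ n := by
    intro z hz
    obtain ⟨hz0, hz1⟩ := hz
    have hznn : (0:ℝ) ≤ z := hz0.le
    have hP : Summable (fun n => p n * z ^ n) := summable_pow_mul hpsum.summable hpnn hznn hz1.le
    have hA : Summable (fun n => a n * z ^ n) := summable_pow_mul hasum.summable hann hznn hz1.le
    set q : ℕ → ℝ := fun k => if k = 0 then 0 else p k with hqdef
    have hqnn : ∀ k, 0 ≤ q k := by
      intro k; by_cases h : k = 0 <;> simp [hqdef, h, hpnn k]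
    have hqle : ∀ k, q k ≤ p k := by
      intro k; by_cases h : k = 0 <;> simp [hqdef, h, hpnn 0]
    have hQs : Summable (fun k => q k * z ^ k) := by
      refine Summable.of_nonneg_of_le (fun k => mul_nonneg (hqnn k) (pow_nonneg hznn k))
        (fun k => mul_le_mul_of_nonneg_right (hqle k) (pow_nonneg hznn k)) hP
    have hQn : Summable (fun k => ‖q k * z ^ k‖) :=
      hQs.congr fun k => ((abs_of_nonneg (mul_nonneg (hqnn k) (pow_nonneg hznn k))).symm)
    have hAn : Summable (fun k => ‖a k * z ^ k‖) :=
      hA.congr fun k => ((abs_of_nonneg (mul_nonneg (hann k) (pow_nonneg hznn k))).symm)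
    have hCauchy := Summable.tsum_mul_tsum_eq_tsum_sum_range hQs hA
      (summable_mul_of_summable_norm hQn hAn)
    have hconv_s : Summable
        (fun n => ∑ k ∈ Finset.range (n + 1), (q k * z ^ k) * (a (n - k) * z ^ (n - k))) :=
      (summable_norm_sum_mul_range_of_summable_norm hQn hAn).of_norm
    have hinner : ∀ n : ℕ, (∑ k ∈ Finset.range (n + 1), (q k * z ^ k) * (a (n - k) * z ^ (n - k)))
        = z ^ n * ∑ i ∈ Finset.Icc 1 n, p i * a (n - i) := by
      intro n
      rw [Finset.sum_range_succ']
      have hq0 : q 0 * z ^ 0 * (a (n - 0) * z ^ (n - 0)) = 0 := by simp [hqdef]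
      rw [hq0, add_zero]
      rw [← Finset.Ico_add_one_right_eq_Icc, Finset.sum_Ico_eq_sum_range]
      try simp only [Nat.add_sub_cancel]
      rw [Finset.mul_sum]
      refine Finset.sum_congr rfl ?_
      intro k hk
      rw [Finset.mem_range] at hk
      have hq : q (k + 1) = p (k + 1) := by simp [hqdef]
      have hzp : z ^ (k + 1) * z ^ (n - (k + 1)) = z ^ n := by
        rw [← pow_add]; congr 1; omega
      have h1k : 1 + k = k + 1 := by omega
      rw [hq, h1k]
      calc p (k + 1) * z ^ (k + 1) * (a (n - (k + 1)) * z ^ (n - (k + 1)))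
          = (z ^ (k + 1) * z ^ (n - (k + 1))) * (p (k + 1) * a (n - (k + 1))) := by ring
        _ = z ^ n * (p (k + 1) * a (n - (k + 1))) := by rw [hzp]
    have hconv_s2 : Summable (fun n => z ^ n * ∑ i ∈ Finset.Icc 1 n, p i * a (n - i)) :=
      hconv_s.congr fun n => hinner n
    have hmain : ∑' n, z ^ n * (∑ i ∈ Finset.Icc 1 n, p i * a (n - i))
        = z * ((∑' n, p n * z ^ n) - p 0 * (∑' n, a n * z ^ n)) := by
      rw [Summable.tsum_eq_zero_add hconv_s2]
      have h00 : z ^ 0 * (∑ i ∈ Finset.Icc 1 0, p i * a (0 - i)) = 0 := by simp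
      rw [h00, zero_add]
      have hterm : ∀ j : ℕ, z ^ (j + 1) * (∑ i ∈ Finset.Icc 1 (j + 1), p i * a (j + 1 - i))
          = z * (p j * z ^ j) - p 0 * (z * (a j * z ^ j)) := by
        intro j
        have hb := hbal j
        have h1 : (∑ i ∈ Finset.Icc 1 (j + 1), p i * a (j + 1 - i)) = p j - p 0 * a j := by
          linarith
        rw [h1]
        ring
      rw [tsum_congr hterm]
      rw [Summable.tsum_sub (hP.mul_left z) ((hA.mul_left z).mul_left (p 0))]
      rw [tsum_mul_left, tsum_mul_left, tsum_mul_left]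
      ring
    have hqtsum : ∑' k, q k * z ^ k = (∑' n, p n * z ^ n) - p 0 := by
      have h1 := Summable.tsum_eq_zero_add hQs
      have h2 := Summable.tsum_eq_zero_add hP
      have h3 : (fun b : ℕ => q (b + 1) * z ^ (b + 1)) = fun b => p (b + 1) * z ^ (b + 1) :=
        funext fun b => by simp [hqdef]
      rw [h3] at h1
      have h4 : q 0 * z ^ 0 = 0 := by simp [hqdef]
      rw [h4, zero_add] at h1
      have h5 : p 0 * z ^ 0 = p 0 := by simp
      rw [h5] at h2
      rw [h1, h2]
      ring
    have hE0 : ((∑' n, p n * z ^ n) - p 0) * (∑' n, a n * z ^ n)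
        = z * ((∑' n, p n * z ^ n) - p 0 * (∑' n, a n * z ^ n)) := by
      rw [← hqtsum, hCauchy, tsum_congr hinner, hmain]
    have gfa : (1 - z) * (∑' k, α k * z ^ k) = 1 - ∑' n, a n * z ^ n := by
      have h1 := tail_gf hasum.summable hann hasum hznn hz1
      rw [show (∑' k, (∑' m, a (k + 1 + m)) * z ^ k) = ∑' k, α k * z ^ k from
        tsum_congr fun k => by rw [hαdef]] at h1
      exact h1
    have h1z : (1:ℝ) - z ≠ 0 := sub_ne_zero.2 (ne_of_gt (by linarith))
    apply mul_left_cancel₀ h1z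
    linear_combination (-(∑' n, p n * z ^ n)) * gfa + hE0
  -- filter and limits
  have hFne : (𝓝[Set.Ioo (0:ℝ) 1] (1:ℝ)).NeBot := by
    apply mem_closure_iff_nhdsWithin_neBot.1
    rw [closure_Ioo (by norm_num : (0:ℝ) ≠ 1)]
    exact Set.right_mem_Icc.2 zero_le_one
  have hPlim := abel_nonneg hpnn hpsum
  have hAlim := abel_nonneg hann hasum
  have hGlim := abel_nonneg hαnn hαsum
  have hHlim := abel_nonneg hβnn hβsum
  have hQlim := abel_nonneg hTpnn hTpsum
  have hp0 : p 0 = 1 - ρ := by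
    have t1 : Tendsto (fun z : ℝ => (∑' n, p n * z ^ n) * (1 - ∑' k, α k * z ^ k))
        (𝓝[Set.Ioo (0:ℝ) 1] 1) (𝓝 (1 * (1 - ρ))) := hPlim.mul (tendsto_const_nhds.sub hGlim)
    have t2 : Tendsto (fun z : ℝ => p 0 * ∑' n, a n * z ^ n)
        (𝓝[Set.Ioo (0:ℝ) 1] 1) (𝓝 (p 0 * 1)) := hAlim.const_mul (p 0)
    have heq : (fun z : ℝ => (∑' n, p n * z ^ n) * (1 - ∑' k, α k * z ^ k))
        =ᶠ[𝓝[Set.Ioo (0:ℝ) 1] 1] (fun z : ℝ => p 0 * ∑' n, a n * z ^ n) := by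
      filter_upwards [self_mem_nhdsWithin] with z hz
      exact hE1 z hz
    have h3 := tendsto_nhds_unique (t1.congr' heq) t2
    rw [one_mul, mul_one] at h3
    linarith
  -- identity E2
  have hE2 : ∀ z : ℝ, z ∈ Set.Ioo (0:ℝ) 1 →
      (∑' k, Tp k * z ^ k) * (1 - ∑' k, α k * z ^ k)
        = (1 - ρ) * (∑' k, α k * z ^ k) + ∑' k, β k * z ^ k := by
    intro z hz
    obtain ⟨hz0, hz1⟩ := hz
    have hznn : (0:ℝ) ≤ z := hz0.le
    have gfp : (1 - z) * (∑' k, Tp k * z ^ k) = 1 - ∑' n, p n * z ^ n := by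
      have h1 := tail_gf hpsum.summable hpnn hpsum hznn hz1
      rw [show (∑' k, (∑' m, p (k + 1 + m)) * z ^ k) = ∑' k, Tp k * z ^ k from
        tsum_congr fun k => by rw [hTpdef]] at h1
      exact h1
    have gfa : (1 - z) * (∑' k, α k * z ^ k) = 1 - ∑' n, a n * z ^ n := by
      have h1 := tail_gf hasum.summable hann hasum hznn hz1
      rw [show (∑' k, (∑' m, a (k + 1 + m)) * z ^ k) = ∑' k, α k * z ^ k from
        tsum_congr fun k => by rw [hαdef]] at h1
      exact h1
    have gfh : (1 - z) * (∑' k, β k * z ^ k) = ρ - ∑' n, α n * z ^ n := by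
      have h1 := tail_gf hαsum.summable hαnn hαsum hznn hz1
      rw [show (∑' k, (∑' m, α (k + 1 + m)) * z ^ k) = ∑' k, β k * z ^ k from
        tsum_congr fun k => by rw [hβdef]] at h1
      exact h1
    have he1 := hE1 z ⟨hz0, hz1⟩
    rw [hp0] at he1
    have h1z : (1:ℝ) - z ≠ 0 := sub_ne_zero.2 (ne_of_gt (by linarith))
    apply mul_left_cancel₀ h1z
    linear_combination (1 - (∑' k, α k * z ^ k)) * gfp - he1 - (1 - ρ) * gfa - gfh
  -- final limit computation
  have t1 : Tendsto (fun z : ℝ => (∑' k, Tp k * z ^ k) * (1 - ∑' k, α k * z ^ k))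
      (𝓝[Set.Ioo (0:ℝ) 1] 1) (𝓝 (L * (1 - ρ))) := hQlim.mul (tendsto_const_nhds.sub hGlim)
  have t2 : Tendsto (fun z : ℝ => (1 - ρ) * (∑' k, α k * z ^ k) + ∑' k, β k * z ^ k)
      (𝓝[Set.Ioo (0:ℝ) 1] 1) (𝓝 ((1 - ρ) * ρ + M2)) := (hGlim.const_mul (1 - ρ)).add hHlim
  have heq : (fun z : ℝ => (∑' k, Tp k * z ^ k) * (1 - ∑' k, α k * z ^ k))
      =ᶠ[𝓝[Set.Ioo (0:ℝ) 1] 1]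
      (fun z : ℝ => (1 - ρ) * (∑' k, α k * z ^ k) + ∑' k, β k * z ^ k) := by
    filter_upwards [self_mem_nhdsWithin] with z hz
    exact hE2 z hz
  exact tendsto_nhds_unique (t1.congr' heq) t2


/-- Pollaczek–Khinchine mean formula for the stationary M/G/1 queue: with Poisson
arrival rate `λ`, service distribution `σ` with mean `E[S]` and second moment `E[S²]`,
and utilization `ρ = λ E[S] < 1`, the stationary mean number in system is
`L = ρ + λ² E[S²] / (2(1-ρ))`.  The stationary queue-length distribution `p` is
characterized by the balance equations of the embedded chain at departure epochs,
where `a k` is the probability of `k` Poisson arrivals during one service. -/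
theorem pollaczek_khinchine_mean
    (lam : ℝ) (hlam : 0 < lam)
    (σ : Measure ℝ) [IsProbabilityMeasure σ] (hσ : σ (Set.Iio 0) = 0)
    (ES ES2 : ℝ)
    (hES : ES = ∫ t, t ∂σ) (hES2 : ES2 = ∫ t, t ^ 2 ∂σ)
    (hint : Integrable (fun t => t) σ) (hint2 : Integrable (fun t => t ^ 2) σ)
    (ρ : ℝ) (hρ : ρ = lam * ES) (hstab : ρ < 1)
    (a : ℕ → ℝ)
    (ha : ∀ k, a k = ∫ t, Real.exp (-lam * t) * (lam * t) ^ k / (Nat.factorial k) ∂σ)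
    (p : ℕ → ℝ) (hpnonneg : ∀ j, 0 ≤ p j) (hpsum : HasSum p 1)
    (hbalance : ∀ j, p j = p 0 * a j + ∑ i ∈ Finset.Icc 1 (j + 1), p i * a (j + 1 - i))
    (L : ℝ) (hL : HasSum (fun j : ℕ => (j : ℝ) * p j) L) :
    L = ρ + lam ^ 2 * ES2 / (2 * (1 - ρ)) := by
  -- Step A: moments of the arrival-count distribution `a`
  set f : ℕ → ℝ → ℝ := fun k t => Real.exp (-lam * t) * (lam * t) ^ k / (Nat.factorial k)
    with hfdef
  have hae : ∀ᵐ t ∂σ, 0 ≤ t := by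
    have hset : {t : ℝ | ¬ 0 ≤ t} = Set.Iio 0 := by ext t; simp [not_le]
    rw [ae_iff, hset]
    exact hσ
  have hS0 : ∀ t : ℝ, HasSum (fun k => f k t) 1 := by
    intro t
    have h1 : HasSum (fun k => (lam * t) ^ k / (Nat.factorial k : ℝ)) (Real.exp (lam * t)) := by
      rw [Real.exp_eq_exp_ℝ]
      exact NormedSpace.expSeries_div_hasSum_exp (lam * t)
    have h2 := h1.mul_left (Real.exp (-(lam * t)))
    have h3 : Real.exp (-(lam * t)) * Real.exp (lam * t) = 1 := by
      rw [← Real.exp_add]; simp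
    rw [h3] at h2
    exact hasSum_congr' h2 fun k => by rw [hfdef]; simp [neg_mul, mul_div_assoc]
  have hS1 : ∀ t : ℝ, HasSum (fun k : ℕ => (k:ℝ) * f k t) (lam * t) := by
    intro t
    have h1 := (hS0 t).mul_left (lam * t)
    rw [mul_one] at h1
    have h2 : ∀ m : ℕ, ((m + 1 : ℕ):ℝ) * f (m + 1) t = (lam * t) * f m t := by
      intro m
      rw [hfdef]
      simp only []
      have hm : (Nat.factorial (m+1) : ℝ) = ((m:ℝ)+1) * Nat.factorial m := by
        push_cast [Nat.factorial_succ]; ring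
      have hfm : (Nat.factorial m : ℝ) ≠ 0 := Nat.cast_ne_zero.2 (Nat.factorial_ne_zero m)
      have hm1 : ((m:ℝ)+1) ≠ 0 := by positivity
      push_cast
      rw [hm]
      field_simp
      ring
    have h3 : HasSum (fun m : ℕ => ((fun k : ℕ => (k:ℝ) * f k t) (m + 1))) (lam * t) :=
      hasSum_congr' h1 fun m => (h2 m).symm
    have h4 := (hasSum_nat_add_iff (f := fun k : ℕ => (k:ℝ) * f k t) 1).1 h3
    simpa using h4
  have hS2 : ∀ t : ℝ, HasSum (fun k : ℕ => (k:ℝ) * ((k:ℝ) - 1) * f k t) ((lam * t) ^ 2) := by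
    intro t
    have h1 := (hS0 t).mul_left ((lam * t) ^ 2)
    rw [mul_one] at h1
    have h2 : ∀ m : ℕ, ((m + 2 : ℕ):ℝ) * (((m + 2 : ℕ):ℝ) - 1) * f (m + 2) t
        = (lam * t) ^ 2 * f m t := by
      intro m
      rw [hfdef]
      simp only []
      have hm : (Nat.factorial (m+2) : ℝ) = ((m:ℝ)+2) * (((m:ℝ)+1) * Nat.factorial m) := by
        push_cast [Nat.factorial_succ]; ring
      have hfm : (Nat.factorial m : ℝ) ≠ 0 := Nat.cast_ne_zero.2 (Nat.factorial_ne_zero m)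
      have hm1 : ((m:ℝ)+1) ≠ 0 := by positivity
      have hm2 : ((m:ℝ)+2) ≠ 0 := by positivity
      push_cast
      rw [hm]
      field_simp
      ring
    have h3 : HasSum (fun m : ℕ => ((fun k : ℕ => (k:ℝ) * ((k:ℝ) - 1) * f k t) (m + 2)))
        ((lam * t) ^ 2) := hasSum_congr' h1 fun m => (h2 m).symm
    have h4 := (hasSum_nat_add_iff (f := fun k : ℕ => (k:ℝ) * ((k:ℝ) - 1) * f k t) 2).1 h3
    have h5 : ∑ i ∈ Finset.range 2, (i:ℝ) * ((i:ℝ) - 1) * f i t = 0 := by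
      simp [Finset.sum_range_succ]
    rw [h5, add_zero] at h4
    exact h4
  have hf_nonneg : ∀ t : ℝ, 0 ≤ t → ∀ k, 0 ≤ f k t := by
    intro t ht k
    rw [hfdef]
    have h1 : 0 ≤ lam * t := mul_nonneg hlam.le ht
    positivity
  have hfc : ∀ k, AEStronglyMeasurable (f k) σ := by
    intro k
    apply Continuous.aestronglyMeasurable
    rw [hfdef]
    fun_prop
  have hfi : ∀ k, Integrable (f k) σ := by
    intro k
    refine Integrable.mono' (integrable_const 1) (hfc k) ?_
    filter_upwards [hae] with t ht
    rw [Real.norm_eq_abs, abs_of_nonneg (hf_nonneg t ht k)]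
    exact le_hasSum (hS0 t) k fun j _ => hf_nonneg t ht j
  have hfi1 : ∀ k : ℕ, Integrable (fun t => (k:ℝ) * f k t) σ := by
    intro k
    refine Integrable.mono' (hint.const_mul lam) ((hfc k).const_mul _) ?_
    filter_upwards [hae] with t ht
    rw [Real.norm_eq_abs, abs_of_nonneg (mul_nonneg (Nat.cast_nonneg k) (hf_nonneg t ht k))]
    exact le_hasSum (hS1 t) k fun j _ => mul_nonneg (Nat.cast_nonneg j) (hf_nonneg t ht j)
  have hquad_nonneg : ∀ j : ℕ, (0:ℝ) ≤ (j:ℝ) * ((j:ℝ) - 1) := by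
    intro j
    rcases Nat.eq_zero_or_pos j with h | h
    · subst h; simp
    · have : (1:ℝ) ≤ (j:ℝ) := by exact_mod_cast h
      nlinarith [Nat.cast_nonneg (α := ℝ) j]
  have hfi2 : ∀ k : ℕ, Integrable (fun t => (k:ℝ) * ((k:ℝ) - 1) * f k t) σ := by
    intro k
    refine Integrable.mono' (hint2.const_mul (lam ^ 2)) ((hfc k).const_mul _) ?_
    filter_upwards [hae] with t ht
    rw [Real.norm_eq_abs,
      abs_of_nonneg (mul_nonneg (hquad_nonneg k) (hf_nonneg t ht k))]
    have h1 := le_hasSum (hS2 t) k fun j _ => mul_nonneg (hquad_nonneg j) (hf_nonneg t ht j)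
    calc (k:ℝ) * ((k:ℝ) - 1) * f k t ≤ (lam * t) ^ 2 := h1
      _ = lam ^ 2 * t ^ 2 := by ring
  have hsa : HasSum a 1 := by
    have h1 := hasSum_integral σ f (fun _ => 1) hfi (integrable_const 1)
      (hae.mono fun t ht k => hf_nonneg t ht k) (Eventually.of_forall hS0)
    have h2 : (∫ _ : ℝ, (1:ℝ) ∂σ) = 1 := by simp
    rw [h2] at h1
    exact hasSum_congr' h1 fun k => (ha k).symm
  have hsa1 : HasSum (fun k : ℕ => (k:ℝ) * a k) (lam * ES) := by
    have h1 := hasSum_integral σ (fun k t => (k:ℝ) * f k t) (fun t => lam * t) hfi1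
      (hint.const_mul lam)
      (hae.mono fun t ht k => mul_nonneg (Nat.cast_nonneg k) (hf_nonneg t ht k))
      (Eventually.of_forall hS1)
    have h2 : (∫ t, lam * t ∂σ) = lam * ES := by
      rw [hES, integral_const_mul]
    rw [h2] at h1
    refine hasSum_congr' h1 fun k => ?_
    show (∫ t, (k:ℝ) * f k t ∂σ) = (k:ℝ) * a k
    rw [integral_const_mul, ← ha k]
  have hsa2 : HasSum (fun k : ℕ => (k:ℝ) * ((k:ℝ) - 1) * a k) (lam ^ 2 * ES2) := by
    have h1 := hasSum_integral σ (fun k t => (k:ℝ) * ((k:ℝ) - 1) * f k t)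
      (fun t => lam ^ 2 * t ^ 2) hfi2 (hint2.const_mul (lam ^ 2))
      (hae.mono fun t ht k => mul_nonneg (hquad_nonneg k) (hf_nonneg t ht k))
      (Eventually.of_forall fun t => by
        have h6 := hS2 t
        have h3 : (lam * t) ^ 2 = lam ^ 2 * t ^ 2 := by ring
        rw [h3] at h6
        exact h6)
    have h2 : (∫ t, lam ^ 2 * t ^ 2 ∂σ) = lam ^ 2 * ES2 := by
      rw [hES2, integral_const_mul]
    rw [h2] at h1
    refine hasSum_congr' h1 fun k => ?_
    show (∫ t, (k:ℝ) * ((k:ℝ) - 1) * f k t ∂σ) = (k:ℝ) * ((k:ℝ) - 1) * a k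
    rw [integral_const_mul, ← ha k]
  have ha_nonneg : ∀ k, 0 ≤ a k := by
    intro k
    rw [ha k]
    exact integral_nonneg_of_ae (hae.mono fun t ht => hf_nonneg t ht k)
  -- Step B: tail sums
  have hαsum : HasSum (fun k : ℕ => ∑' m, a (k + 1 + m)) ρ := by
    rw [hρ]
    exact tail_counting_one ha_nonneg hsa.summable hsa1
  have hαnn : ∀ k : ℕ, 0 ≤ ∑' m, a (k + 1 + m) := fun k => tsum_nonneg fun m => ha_nonneg _
  have hid : HasSum (fun k : ℕ => (k:ℝ) * ∑' m, a (k + 1 + m)) (lam ^ 2 * ES2 / 2) := by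
    refine tail_counting_id ha_nonneg hsa.summable ?_
    exact hasSum_congr' (hsa2.div_const 2) fun n => by ring
  have hβsum : HasSum (fun k : ℕ => ∑' m, (fun j : ℕ => ∑' m2, a (j + 1 + m2)) (k + 1 + m))
      (lam ^ 2 * ES2 / 2) :=
    tail_counting_one (c := fun j : ℕ => ∑' m2, a (j + 1 + m2)) hαnn hαsum.summable hid
  have hTpsum : HasSum (fun k : ℕ => ∑' m, p (k + 1 + m)) L :=
    tail_counting_one hpnonneg hpsum.summable hL
  have key := pk_core ρ L (lam ^ 2 * ES2 / 2) p a
    (fun k : ℕ => ∑' m, a (k + 1 + m))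
    (fun k : ℕ => ∑' m, (fun j : ℕ => ∑' m2, a (j + 1 + m2)) (k + 1 + m))
    (fun k : ℕ => ∑' m, p (k + 1 + m))
    hpnonneg ha_nonneg hαnn
    (fun k => tsum_nonneg fun m => hαnn _)
    (fun k => tsum_nonneg fun m => hpnonneg _)
    (fun k => rfl) (fun k => rfl) (fun k => rfl)
    hpsum hsa hαsum hβsum hTpsum hbalance hstab
  -- final algebra
  have h1ρ : (0:ℝ) < 1 - ρ := by linarith
  have h2ρ : (1:ℝ) - ρ ≠ 0 := ne_of_gt h1ρ
  field_simp
  linear_combination 2 * key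
end
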